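/- arXiv:1403.0229 — 5 statements merged into one kernel-verified Lean document; each statement's English description precedes it below -/
import Mathlib

section
/- For n ≥ 1, x ∈ {1,...,n} with x ≤ (n-1)/2, and p ∈ (x/n, (x+1)/n), the binomial density satisfies f_{n-1,p}(x) > f_{n,(x+1)/n}(x+1). -/
open Finset

/-- Binomial probability mass function `f_{n,p}(k)`. -/
noncomputable def binomPmf (n : ℕ) (p : ℝ) (k : ℕ) : ℝ :=
  (n.choose k : ℝ) * p ^ k * (1 - p) ^ (n - k)

/-- Binomial cumulative distribution function `F_{n,p}(k) = P(B ≤ k)`. -/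
noncomputable def binomCdf (n : ℕ) (p : ℝ) (k : ℕ) : ℝ :=
  ∑ j ∈ Finset.range (k + 1), binomPmf n p j

/-- Binomial upper tail `P(B ≥ x) = ∑_{k=x}^n f_{n,p}(k)`. -/
noncomputable def binomTail (n : ℕ) (p : ℝ) (x : ℕ) : ℝ :=
  ∑ k ∈ Finset.Icc x n, binomPmf n p k



lemma step_ineq (b : ℕ) (hb : 1 ≤ b) :
    ((b:ℝ)+1)^(2*b+1) ≤ (b:ℝ)^b * ((b:ℝ)+2)^(b+1) := by
  set B := (b:ℝ) with hB
  have hB1 : (1:ℝ) ≤ B := by rw [hB]; exact_mod_cast hb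
  have hK : (0:ℝ) < B*(B+2) := by nlinarith
  have h1 : (1 + 1/(B*(B+2)))^b ≤ Real.exp (1/(B+2)) := by
    have h0 : 1 + 1/(B*(B+2)) ≤ Real.exp (1/(B*(B+2))) := by
      have := Real.add_one_le_exp (1/(B*(B+2))); linarith
    calc (1 + 1/(B*(B+2)))^b ≤ Real.exp (1/(B*(B+2)))^b :=
          pow_le_pow_left₀ (by positivity) h0 b
      _ = Real.exp ((b:ℝ) * (1/(B*(B+2)))) := (Real.exp_nat_mul _ b).symm
      _ = Real.exp (1/(B+2)) := by
          congr 1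
          rw [hB]
          field_simp
  have h2 : (B+1) * Real.exp (1/(B+2)) ≤ B+2 := by
    have h3 := Real.add_one_le_exp (-(1/(B+2)))
    have h5 := Real.exp_pos (1/(B+2))
    have h3' : (B+1)/(B+2) ≤ Real.exp (-(1/(B+2))) := by
      have : -(1/(B+2)) + 1 = (B+1)/(B+2) := by field_simp; ring
      linarith [h3, this.symm ▸ h3]
    have h6 : (B+1)/(B+2) * Real.exp (1/(B+2)) ≤ 1 := by
      calc (B+1)/(B+2) * Real.exp (1/(B+2))
          ≤ Real.exp (-(1/(B+2))) * Real.exp (1/(B+2)) :=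
            mul_le_mul_of_nonneg_right h3' h5.le
        _ = 1 := by rw [← Real.exp_add]; simp
    have h7 := mul_le_mul_of_nonneg_left h6 (show (0:ℝ) ≤ B+2 by linarith)
    have h8 : (B+2) * ((B+1)/(B+2) * Real.exp (1/(B+2))) = (B+1)*Real.exp (1/(B+2)) := by
      field_simp
    rw [h8] at h7
    linarith
  have key : ((B+1)^2)^b ≤ (B*(B+2))^b * Real.exp (1/(B+2)) := by
    have e1 : (B+1)^2 = (B*(B+2)) * (1 + 1/(B*(B+2))) := by field_simp; ring
    calc ((B+1)^2)^b = (B*(B+2))^b * (1 + 1/(B*(B+2)))^b := by rw [e1, mul_pow]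
      _ ≤ (B*(B+2))^b * Real.exp (1/(B+2)) :=
          mul_le_mul_of_nonneg_left h1 (by positivity)
  have e2 : (B+1)^(2*b+1) = ((B+1)^2)^b * (B+1) := by
    rw [← pow_mul, pow_succ]
  rw [e2]
  calc ((B+1)^2)^b * (B+1) ≤ ((B*(B+2))^b * Real.exp (1/(B+2))) * (B+1) := by
        apply mul_le_mul_of_nonneg_right key (by linarith)
    _ = (B*(B+2))^b * ((B+1) * Real.exp (1/(B+2))) := by ring
    _ ≤ (B*(B+2))^b * (B+2) := mul_le_mul_of_nonneg_left h2 (by positivity)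
    _ = B^b * (B+2)^(b+1) := by rw [mul_pow]; ring

lemma mono_ineq (a : ℕ) (ha : 1 ≤ a) : ∀ b : ℕ, a ≤ b →
    ((a:ℝ)+1)^a * (b:ℝ)^b ≤ (a:ℝ)^a * ((b:ℝ)+1)^b := by
  intro b
  induction b with
  | zero => intro h; omega
  | succ c ih =>
    intro h
    rcases eq_or_lt_of_le h with heq | hlt
    · subst heq; rw [mul_comm]
    · have hac : a ≤ c := by omega
      have hc1 : 1 ≤ c := le_trans ha hac
      have ihc := ih hac
      have hcpos : (0:ℝ) < (c:ℝ)^c := by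
        have : (0:ℝ) < (c:ℝ) := by exact_mod_cast hc1
        positivity
      have hstep := step_ineq c hc1
      have h1 := mul_le_mul_of_nonneg_right ihc
        (by positivity : (0:ℝ) ≤ ((c:ℝ)+1)^(c+1))
      have h2 := mul_le_mul_of_nonneg_left hstep
        (by positivity : (0:ℝ) ≤ (a:ℝ)^a)
      have key : (((a:ℝ)+1)^a * ((c:ℝ)+1)^(c+1)) * (c:ℝ)^c ≤
          ((a:ℝ)^a * ((c:ℝ)+2)^(c+1)) * (c:ℝ)^c := by
        calc (((a:ℝ)+1)^a * ((c:ℝ)+1)^(c+1)) * (c:ℝ)^c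
            = (((a:ℝ)+1)^a * (c:ℝ)^c) * ((c:ℝ)+1)^(c+1) := by ring
          _ ≤ ((a:ℝ)^a * ((c:ℝ)+1)^c) * ((c:ℝ)+1)^(c+1) := h1
          _ = (a:ℝ)^a * ((c:ℝ)+1)^(2*c+1) := by
              rw [mul_assoc, ← pow_add]; congr 2; omega
          _ ≤ (a:ℝ)^a * ((c:ℝ)^c * ((c:ℝ)+2)^(c+1)) := h2
          _ = ((a:ℝ)^a * ((c:ℝ)+2)^(c+1)) * (c:ℝ)^c := by ring
      have hfin := le_of_mul_le_mul_right key hcpos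
      have e : ((c:ℝ)+1+1) = (c:ℝ)+2 := by ring
      push_cast [e]
      exact hfin

theorem binomPmf_ineq (n x : ℕ) (p : ℝ) (hn : 1 ≤ n) (hx1 : 1 ≤ x) (hxn : x ≤ n)
    (hx : (x : ℝ) ≤ ((n : ℝ) - 1) / 2)
    (hp1 : (x : ℝ) / n < p) (hp2 : p < ((x : ℝ) + 1) / n) :
    binomPmf (n - 1) p x > binomPmf n (((x : ℝ) + 1) / n) (x + 1) := by
  have hn2 : 2*x+1 ≤ n := by
    have h1 : ((2*x+1 : ℕ):ℝ) ≤ (n:ℝ) := by push_cast; linarith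
    exact_mod_cast h1
  set b : ℕ := n - 1 - x with hbdef
  have hb1 : 1 ≤ b := by omega
  have hxb : x ≤ b := by omega
  have hnb : n = x + b + 1 := by omega
  set X := (x:ℝ) with hX
  set B := (b:ℝ) with hB
  set N := (n:ℝ) with hN
  have hNXB : N = X + B + 1 := by rw [hN, hX, hB, hnb]; push_cast; ring
  have hX1 : (1:ℝ) ≤ X := by rw [hX]; exact_mod_cast hx1
  have hB1 : (1:ℝ) ≤ B := by rw [hB]; exact_mod_cast hb1
  have hXB : X ≤ B := by rw [hX, hB]; exact_mod_cast hxb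
  have hNpos : (0:ℝ) < N := by linarith
  set M := X + B with hM
  have hMpos : (0:ℝ) < M := by rw [hM]; linarith
  set q : ℝ := (X+1)/N with hq
  set g : ℝ → ℝ := fun r => r^x * (1-r)^b with hg
  -- interval facts
  have hq1 : q < 1 := by rw [hq, div_lt_one hNpos]; linarith
  have hXM1 : X/M < 1 := by rw [div_lt_one hMpos, hM]; linarith
  have h1 : X/N < X/M := by
    apply div_lt_div_of_pos_left (by linarith) hMpos (by linarith)
  have h2 : X/M < q := by
    rw [hq, div_lt_div_iff₀ hMpos hNpos]
    nlinarith
  -- derivative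
  have hderiv : ∀ r : ℝ, HasDerivAt g
      ((x:ℝ) * r^(x-1) * (1-r)^b + r^x * ((b:ℝ) * (1-r)^(b-1) * (-1))) r :=
    fun r => (hasDerivAt_pow x r).mul (((hasDerivAt_id r).const_sub 1).pow b)
  have hDfact : ∀ r : ℝ, (x:ℝ) * r^(x-1) * (1-r)^b + r^x * ((b:ℝ) * (1-r)^(b-1) * (-1))
      = r^(x-1) * (1-r)^(b-1) * (X*(1-r) - B*r) := by
    intro r
    have e1 : r^x = r^(x-1) * r := by rw [← pow_succ]; congr 1; omega
    have e2 : (1-r)^b = (1-r)^(b-1) * (1-r) := by rw [← pow_succ]; congr 1; omega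
    rw [e1, e2]; ring
  have hgc : Continuous g := by
    rw [hg]; exact (continuous_pow x).mul ((continuous_const.sub continuous_id).pow b)
  have hmono : StrictMonoOn g (Set.Icc (X/N) (X/M)) := by
    apply strictMonoOn_of_deriv_pos (convex_Icc _ _) hgc.continuousOn
    intro r hr
    rw [interior_Icc] at hr
    obtain ⟨hr1, hr2⟩ := hr
    rw [(hderiv r).deriv, hDfact r]
    have hr0 : 0 < r := lt_trans (div_pos (by linarith) hNpos) hr1
    have hr1' : r < 1 := hr2.trans hXM1
    have h3 : 0 < X*(1-r) - B*r := by
      have := (lt_div_iff₀ hMpos).mp hr2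
      rw [hM] at this
      nlinarith
    exact mul_pos (mul_pos (pow_pos hr0 _) (pow_pos (by linarith) _)) h3
  have hanti : StrictAntiOn g (Set.Icc (X/M) q) := by
    apply strictAntiOn_of_deriv_neg (convex_Icc _ _) hgc.continuousOn
    intro r hr
    rw [interior_Icc] at hr
    obtain ⟨hr1, hr2⟩ := hr
    rw [(hderiv r).deriv, hDfact r]
    have hr0 : 0 < r := lt_trans (div_pos (by linarith) hMpos) hr1
    have hr1' : r < 1 := hr2.trans hq1
    have h3 : X*(1-r) - B*r < 0 := by
      have := (div_lt_iff₀ hMpos).mp hr1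
      rw [hM] at this
      nlinarith
    exact mul_neg_of_pos_of_neg (mul_pos (pow_pos hr0 _) (pow_pos (by linarith) _)) h3
  -- endpoint inequality
  have hend : g q ≤ g (X/N) := by
    have eq1 : (1:ℝ) - q = B/N := by
      rw [hq]; field_simp; linarith
    have eq2 : (1:ℝ) - X/N = (B+1)/N := by
      field_simp; linarith
    have e1 : g q = ((X+1)^x * B^b) / N^(x+b) := by
      show q^x * (1-q)^b = _
      rw [eq1, hq, div_pow, div_pow, div_mul_div_comm, pow_add]
    have e2 : g (X/N) = (X^x * (B+1)^b) / N^(x+b) := by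
      show (X/N)^x * (1-X/N)^b = _
      rw [eq2, div_pow, div_pow, div_mul_div_comm, pow_add]
    rw [e1, e2]
    apply div_le_div_of_nonneg_right ?_ (by positivity)
    · exact mono_ineq x hx1 b hxb
  -- main comparison
  have hmain : g q < g p := by
    rcases le_or_gt p (X/M) with hcase | hcase
    · have hA : g (X/N) < g p := hmono ⟨le_rfl, h1.le⟩ ⟨hp1.le, hcase⟩ hp1
      exact lt_of_le_of_lt hend hA
    · exact hanti ⟨hcase.le, hp2.le⟩ ⟨h2.le, le_rfl⟩ hp2
  -- assemble
  have hCpos : (0:ℝ) < ((n-1).choose x : ℝ) := by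
    exact_mod_cast Nat.choose_pos (by omega : x ≤ n-1)
  have hL : binomPmf (n-1) p x = ((n-1).choose x : ℝ) * g p := by
    rw [binomPmf, ← hbdef, hg, mul_assoc]
  have hR : binomPmf n q (x+1) = ((n-1).choose x : ℝ) * g q := by
    have hnx : n - (x+1) = b := by omega
    have hcid : n * (n-1).choose x = n.choose (x+1) * (x+1) := by
      have h0 := Nat.add_one_mul_choose_eq (n-1) x
      have hs : n - 1 + 1 = n := by omega
      rwa [hs] at h0
    have hcidR : N * ((n-1).choose x : ℝ) = (n.choose (x+1) : ℝ) * (X+1) := by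
      rw [hN, hX]; exact_mod_cast hcid
    rw [binomPmf, hnx, hg]
    have e : (n.choose (x+1) : ℝ) * q^(x+1) = ((n-1).choose x : ℝ) * q^x := by
      calc (n.choose (x+1) : ℝ) * q^(x+1)
          = (n.choose (x+1) : ℝ) * (X+1) * q^x / N := by rw [pow_succ, hq]; field_simp
        _ = (N * ((n-1).choose x : ℝ)) * q^x / N := by rw [hcidR]
        _ = ((n-1).choose x : ℝ) * q^x := by field_simp
    calc (n.choose (x+1) : ℝ) * q^(x+1) * (1-q)^b
        = ((n.choose (x+1) : ℝ) * q^(x+1)) * (1-q)^b := by ring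
      _ = (((n-1).choose x : ℝ) * q^x) * (1-q)^b := by rw [e]
      _ = ((n-1).choose x : ℝ) * (q^x * (1-q)^b) := by ring
  rw [gt_iff_lt, hR, hL]
  exact mul_lt_mul_of_pos_left hmain hCpos
end

section
/- Let n ≥ 1, β ∈ [β_n, 1) where β_n := F_{n,1/n}(1), and x ∈ {2,...,n}. Let g_n(x) be the unique p ∈ [0,1] with P(Binomial(n,p) ≥ x) = 1 - β. Then g_n(x) ≤ (x-1)/n. -/
open Finset

lemma cdf_self (N : ℕ) (p : ℝ) : binomCdf N p N = 1 := by
  have h := add_pow p (1 - p) N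
  have hp : p + (1 - p) = 1 := by ring
  rw [hp, one_pow] at h
  rw [binomCdf, h]
  exact Finset.sum_congr rfl fun j _ => by rw [binomPmf]; ring

lemma tail_eq (N x : ℕ) (p : ℝ) (h1 : 1 ≤ x) (hxN : x ≤ N) :
    binomTail N p x = 1 - binomCdf N p (x - 1) := by
  have hx : x - 1 + 1 = x := by omega
  have key : binomCdf N p (x - 1) + binomTail N p x = 1 := by
    rw [← cdf_self N p, binomCdf, binomCdf, binomTail, hx, ← Finset.Ico_add_one_right_eq_Icc x N,
      Finset.range_eq_Ico]
    rw [Finset.sum_Ico_consecutive _ (by omega : 0 ≤ x) (by omega : x ≤ N + 1), Finset.range_eq_Ico]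
  linarith

lemma cdf_succ_level (N : ℕ) (p : ℝ) (m : ℕ) :
    binomCdf N p (m + 1) = binomCdf N p m + binomPmf N p (m + 1) :=
  Finset.sum_range_succ _ _

lemma cdf_succ (n : ℕ) (p : ℝ) : ∀ m, m ≤ n →
    binomCdf (n + 1) p m = binomCdf n p m - p * binomPmf n p m := by
  intro m
  induction m with
  | zero =>
    intro _
    simp only [binomCdf, zero_add, Finset.sum_range_one, binomPmf, Nat.choose_zero_right, Nat.sub_zero,
      Nat.cast_one, pow_zero]
    rw [pow_succ]; ring
  | succ m ih =>
    intro h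
    have hmn : m ≤ n := by omega
    rw [cdf_succ_level, cdf_succ_level, ih hmn]
    have e1 : n - m = n - (m + 1) + 1 := by omega
    have e2 : n + 1 - (m + 1) = n - (m + 1) + 1 := by omega
    have pascal : ((n + 1).choose (m + 1) : ℝ) = n.choose m + n.choose (m + 1) := by
      rw [Nat.choose_succ_succ]; push_cast; ring
    simp only [binomPmf, e1, e2, pow_succ, Nat.add_sub_cancel, pascal]
    ring

lemma hasDerivAt_pmf (N j : ℕ) (p : ℝ) :
    HasDerivAt (fun q => binomPmf N q j)
      ((N.choose j : ℝ) * ((j * p ^ (j - 1)) * (1 - p) ^ (N - j)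
        - p ^ j * ((N - j : ℕ) * (1 - p) ^ (N - j - 1)))) p := by
  have h1 : HasDerivAt (fun q : ℝ => q ^ j) (j * p ^ (j - 1)) p := hasDerivAt_pow j p
  have h0 : HasDerivAt (fun q : ℝ => 1 - q) (-1) p := by
    simpa using (hasDerivAt_id p).const_sub 1
  have h2 : HasDerivAt (fun q : ℝ => (1 - q) ^ (N - j))
      (-(((N - j : ℕ) : ℝ) * (1 - p) ^ (N - j - 1))) p := by
    have := (hasDerivAt_pow (N - j) (1 - p)).comp p h0
    simpa [mul_comm, mul_assoc, Function.comp_def] using this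
  have h3 := (h1.mul h2).const_mul ((N.choose j : ℝ))
  have : (fun q => binomPmf N q j) = fun q => (N.choose j : ℝ) * (q ^ j * (1 - q) ^ (N - j)) := by
    funext q; rw [binomPmf]; ring
  rw [this]
  convert h3 using 1
  · rfl
  · rfl
  · funext q; simp only [Pi.mul_apply]
  ring

lemma hasDerivAt_cdf (N : ℕ) (p : ℝ) : ∀ m, m < N →
    HasDerivAt (fun q => binomCdf N q m)
      (-(((N - m : ℕ) : ℝ) * (N.choose m : ℝ) * p ^ m * (1 - p) ^ (N - m - 1))) p := by
  intro m
  induction m with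
  | zero =>
    intro h
    have : (fun q => binomCdf N q 0) = fun q => binomPmf N q 0 := by
      funext q; rw [binomCdf]; simp [Finset.sum_range_one]
    rw [this]
    convert hasDerivAt_pmf N 0 p using 1
    simp
  | succ m ih =>
    intro h
    have hmN : m < N := by omega
    have hsum := (ih hmN).add (hasDerivAt_pmf N (m + 1) p)
    have : (fun q => binomCdf N q (m + 1)) = fun q => binomCdf N q m + binomPmf N q (m + 1) := by
      funext q; exact cdf_succ_level N q (m + 1 - 1) ▸ cdf_succ_level N q m
    rw [this]
    convert hsum using 1
    · rfl
    · rfl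
    · rfl
    have e1 : N - m - 1 = N - (m + 1) := by omega
    have e3 : N - m = N - (m + 1) + 1 := by omega
    have key : ((m : ℝ) + 1) * (N.choose (m + 1) : ℝ)
        = (((N - (m + 1) : ℕ) : ℝ) + 1) * (N.choose m : ℝ) := by
      have h' := Nat.choose_succ_right_eq N m
      have hc : ((N.choose (m + 1) * (m + 1) : ℕ) : ℝ) = ((N.choose m * (N - m) : ℕ) : ℝ) := by
        rw [h']
      rw [e3] at hc; push_cast at hc; linarith
    rw [e1, e3]
    push_cast
    linear_combination (-(p ^ m * (1 - p) ^ (N - (m + 1)))) * key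

lemma psi_le (n m : ℕ) (p : ℝ) (hm : 1 ≤ m) (hmn : m < n) (hp0 : 0 ≤ p)
    (hp1 : p ≤ (m : ℝ) / n) :
    p ^ m * (1 - p) ^ (n - m) ≤ ((m : ℝ) / n) ^ m * (1 - (m : ℝ) / n) ^ (n - m) := by
  have hn0 : (0 : ℝ) < n := by exact_mod_cast (by omega : 0 < n)
  have hm0 : (0 : ℝ) < m := by exact_mod_cast hm
  have hr0 : (0 : ℝ) < ((n - m : ℕ) : ℝ) := by exact_mod_cast Nat.sub_pos_of_lt hmn
  have hnne : (n : ℝ) ≠ 0 := ne_of_gt hn0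
  have hmne : (m : ℝ) ≠ 0 := ne_of_gt hm0
  have hrne : ((n - m : ℕ) : ℝ) ≠ 0 := ne_of_gt hr0
  set t : ℝ := (m : ℝ) / n with ht
  have ht0 : 0 < t := div_pos hm0 hn0
  have hrn : ((n - m : ℕ) : ℝ) = (n : ℝ) - m := by
    push_cast [Nat.cast_sub hmn.le]; ring
  have ht1 : 1 - t = ((n - m : ℕ) : ℝ) / n := by
    rw [ht, hrn]; field_simp
  have ht1' : 0 < 1 - t := by rw [ht1]; positivity
  rcases eq_or_lt_of_le hp0 with h | hp0'
  · rw [← h, zero_pow (by omega), zero_mul]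
    positivity
  set a : ℝ := p / t with ha
  set b : ℝ := (1 - p) / (1 - t) with hb
  have ha0 : 0 ≤ a := by positivity
  have hb0 : 0 ≤ b := div_nonneg (by nlinarith) ht1'.le
  have hw : (m : ℝ) / n + ((n - m : ℕ) : ℝ) / n = 1 := by
    rw [hrn]; field_simp; ring
  have amgm := Real.geom_mean_le_arith_mean2_weighted
    (by positivity : (0:ℝ) ≤ (m : ℝ) / n) (by positivity : (0:ℝ) ≤ ((n - m : ℕ) : ℝ) / n)
    ha0 hb0 hw
  have h1 : (m : ℝ) / n * a = p := by rw [ha, ht]; field_simp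
  have h2 : ((n - m : ℕ) : ℝ) / n * b = 1 - p := by rw [hb, ht1]; field_simp
  rw [h1, h2] at amgm
  have amgm1 : a ^ ((m : ℝ) / n) * b ^ (((n - m : ℕ) : ℝ) / n) ≤ 1 := by linarith
  have hpow : (a ^ ((m : ℝ) / n) * b ^ (((n - m : ℕ) : ℝ) / n)) ^ (n : ℕ) ≤ 1 := by
    calc (a ^ ((m : ℝ) / n) * b ^ (((n - m : ℕ) : ℝ) / n)) ^ (n : ℕ)
        ≤ 1 ^ (n : ℕ) := pow_le_pow_left₀ (by positivity) amgm1 n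
      _ = 1 := one_pow n
  have hab : a ^ m * b ^ (n - m) ≤ 1 := by
    have e1 : (a ^ ((m : ℝ) / n)) ^ (n : ℕ) = a ^ m := by
      rw [← Real.rpow_natCast (a ^ ((m : ℝ) / n)) n, ← Real.rpow_mul ha0,
        div_mul_cancel₀ _ hnne, Real.rpow_natCast]
    have e2 : (b ^ (((n - m : ℕ) : ℝ) / n)) ^ (n : ℕ) = b ^ (n - m) := by
      rw [← Real.rpow_natCast (b ^ (((n - m : ℕ) : ℝ) / n)) n, ← Real.rpow_mul hb0,
        div_mul_cancel₀ _ hnne, Real.rpow_natCast]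
    calc a ^ m * b ^ (n - m) = (a ^ ((m : ℝ) / n) * b ^ (((n - m : ℕ) : ℝ) / n)) ^ (n : ℕ) := by
          rw [mul_pow, e1, e2]
      _ ≤ 1 := hpow
  have hpa : p = a * t := by rw [ha]; field_simp
  have hqb : 1 - p = b * (1 - t) := by rw [hb]; field_simp
  calc p ^ m * (1 - p) ^ (n - m) = (a ^ m * b ^ (n - m)) * (t ^ m * (1 - t) ^ (n - m)) := by
        rw [hqb, hpa, mul_pow, mul_pow]; ring
    _ ≤ 1 * (t ^ m * (1 - t) ^ (n - m)) :=
        mul_le_mul_of_nonneg_right hab (by positivity)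
    _ = t ^ m * (1 - t) ^ (n - m) := one_mul _
lemma cdf_step (n m : ℕ) (hm : 1 ≤ m) (hmn : m < n) :
    binomCdf (n + 1) ((m : ℝ) / (n + 1)) m ≤ binomCdf n ((m : ℝ) / n) m := by
  have hn0 : (0 : ℝ) < n := by exact_mod_cast (by omega : 0 < n)
  have hm0 : (0 : ℝ) < m := by exact_mod_cast hm
  set t : ℝ := (m : ℝ) / n with ht
  set p₀ : ℝ := (m : ℝ) / (n + 1) with hp₀
  have hp₀0 : 0 ≤ p₀ := by positivity
  have hp₀t : p₀ ≤ t := by rw [ht, hp₀]; gcongr; linarith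
  have htle1 : t ≤ 1 := by rw [ht]; exact (div_le_one hn0).mpr (by exact_mod_cast hmn.le)
  have h1t : 0 ≤ 1 - t := by linarith
  set c : ℝ := ((n + 1 - m : ℕ) : ℝ) * ((n + 1).choose m : ℝ) with hc
  have hc0 : 0 ≤ c := by positivity
  set K : ℝ := c * t ^ m * (1 - t) ^ (n - m) with hK
  have hder : ∀ p : ℝ, HasDerivAt (fun q => binomCdf (n + 1) q m + K * q)
      (K - c * p ^ m * (1 - p) ^ (n - m)) p := by
    intro p
    have h1 := hasDerivAt_cdf (n + 1) p m (by omega)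
    have e : n + 1 - m - 1 = n - m := by omega
    rw [e] at h1
    have h2 := h1.add ((hasDerivAt_id p).const_mul K)
    convert h2 using 1
    · rfl
    · rfl
    · rfl
    rw [hc]; ring
  have hmono : MonotoneOn (fun q => binomCdf (n + 1) q m + K * q) (Set.Icc 0 t) := by
    apply monotoneOn_of_hasDerivWithinAt_nonneg (convex_Icc 0 t)
      (fun p _ => ((hder p).continuousAt).continuousWithinAt)
      (fun p _ => ((hder p).hasDerivWithinAt))
    intro p hp
    rw [interior_Icc] at hp
    have hψ := psi_le n m p hm hmn hp.1.le (by rw [← ht]; exact hp.2.le)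
    have : c * (p ^ m * (1 - p) ^ (n - m)) ≤ c * (t ^ m * (1 - t) ^ (n - m)) := by
      apply mul_le_mul_of_nonneg_left _ hc0
      rw [ht]; exact hψ
    rw [hK]; linarith [this]
  have hle := hmono ⟨hp₀0, hp₀t⟩ ⟨by positivity, le_refl t⟩ hp₀t
  simp only at hle
  have hsucc := cdf_succ n t m hmn.le
  have idnat : (n + 1) * n.choose m = (n + 1).choose m * (n + 1 - m) :=
    (Nat.add_one_mul_choose_eq n m).trans (Nat.choose_succ_right_eq (n + 1) m)
  have idR : ((n : ℝ) + 1) * (n.choose m : ℝ) = ((n + 1).choose m : ℝ) * ((n + 1 - m : ℕ) : ℝ) := by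
    exact_mod_cast idnat
  have e5 : K * (t - p₀) = t * binomPmf n t m := by
    have c1 : (((1 + n).choose m : ℕ) : ℝ) = (((n + 1).choose m : ℕ) : ℝ) := by rw [Nat.add_comm]
    have c2 : ((1 + n - m : ℕ) : ℝ) = ((n + 1 - m : ℕ) : ℝ) := by rw [Nat.add_comm]
    have hn1 : (n : ℝ) + 1 ≠ 0 := by positivity
    have htp : t - p₀ = t / ((n : ℝ) + 1) := by
      rw [ht, hp₀, div_sub_div _ _ (ne_of_gt hn0) hn1, div_div]; ring
    rw [hK, hc, binomPmf, htp, show ((n + 1 - m : ℕ) : ℝ) * ((n + 1).choose m : ℝ)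
      = ((n : ℝ) + 1) * (n.choose m : ℝ) by rw [idR]; ring]
    rw [mul_div_assoc', div_eq_iff hn1]; ring
  linarith [hle, hsucc, e5]
lemma cdf_le_base (m : ℕ) (hm : 1 ≤ m) :
    ∀ n, m + 1 ≤ n → binomCdf n ((m : ℝ) / n) m ≤ 1 - ((m : ℝ) / (m + 1)) ^ (m + 1) := by
  refine Nat.le_induction ?_ ?_
  · push_cast
    set p : ℝ := (m : ℝ) / ((m : ℝ) + 1) with hp
    have h1 := cdf_self (m + 1) p
    have h2 := cdf_succ_level (m + 1) p m
    have h3 : binomPmf (m + 1) p (m + 1) = p ^ (m + 1) := by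
      rw [binomPmf, Nat.choose_self, Nat.sub_self]
      push_cast; ring
    rw [h3] at h2
    rw [h2] at h1
    linarith
  · intro n hn ih
    have hstep := cdf_step n m hm (by omega)
    have hc : ((n : ℝ) + 1) = ((n + 1 : ℕ) : ℝ) := by push_cast; ring
    rw [hc] at hstep
    linarith

lemma base_ge (m : ℕ) (hm : 2 ≤ m) : (8 / 27 : ℝ) ≤ ((m : ℝ) / (m + 1)) ^ (m + 1) := by
  have hm1 : (0 : ℝ) < (m : ℝ) + 1 := by positivity
  set w : ℝ := 3 / ((m : ℝ) + 1) with hw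
  have hw0 : 0 ≤ w := by positivity
  have hw1 : w ≤ 1 := by
    rw [hw, div_le_one hm1]
    have : (2 : ℝ) ≤ m := by exact_mod_cast hm
    linarith
  have hsum : w + (1 - w) = 1 := by ring
  have am := Real.geom_mean_le_arith_mean2_weighted hw0 (by linarith)
    (by norm_num : (0 : ℝ) ≤ 2 / 3) zero_le_one hsum
  rw [Real.one_rpow, mul_one] at am
  have harith : w * (2 / 3) + (1 - w) * 1 = (m : ℝ) / (m + 1) := by
    rw [hw]; field_simp; ring
  rw [harith] at am
  have h1 : ((2 / 3 : ℝ) ^ w) ^ (m + 1) ≤ ((m : ℝ) / (m + 1)) ^ (m + 1) :=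
    pow_le_pow_left₀ (by positivity) am _
  have h2 : ((2 / 3 : ℝ) ^ w) ^ (m + 1) = (8 / 27 : ℝ) := by
    rw [← Real.rpow_natCast ((2 / 3 : ℝ) ^ w) (m + 1), ← Real.rpow_mul (by norm_num)]
    have hwm : w * ((m + 1 : ℕ) : ℝ) = 3 := by
      rw [hw]; push_cast; field_simp
    rw [hwm, show (3 : ℝ) = ((3 : ℕ) : ℝ) by norm_num, Real.rpow_natCast]
    norm_num
  linarith

lemma cdf_one_ge (n : ℕ) (hn : 3 ≤ n) : (19 / 27 : ℝ) ≤ binomCdf n ((1 : ℝ) / n) 1 := by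
  have hn0 : (0 : ℝ) < n := by exact_mod_cast (by omega : 0 < n)
  have hnne : (n : ℝ) ≠ 0 := ne_of_gt hn0
  have hval : binomCdf n ((1 : ℝ) / n) 1
      = (1 - 1 / (n : ℝ)) ^ (n - 1) * (2 - 1 / (n : ℝ)) := by
    rw [binomCdf, Finset.sum_range_succ, Finset.sum_range_one]
    simp only [binomPmf, Nat.choose_zero_right, Nat.choose_one_right, Nat.sub_zero, Nat.cast_one,
      pow_zero, pow_one, one_mul, mul_one]
    have e : (1 - 1 / (n : ℝ)) ^ n = (1 - 1 / (n : ℝ)) ^ (n - 1) * (1 - 1 / (n : ℝ)) := by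
      rw [← pow_succ]
      congr 1
      omega
    rw [e]
    field_simp
    ring
  rw [hval]
  rcases le_or_gt n 11 with h | h
  · interval_cases n <;> norm_num
  · have hK : (0 : ℝ) < (n : ℝ) - 1 := by
      have : (12 : ℝ) ≤ n := by exact_mod_cast h
      linarith
    have h12 : (12 : ℝ) ≤ n := by exact_mod_cast h
    have hkK : ((n - 1 : ℕ) : ℝ) = (n : ℝ) - 1 := by
      push_cast [Nat.cast_sub (by omega : 1 ≤ n)]; ring
    have hup : (1 + 1 / ((n : ℝ) - 1)) ^ (n - 1) ≤ Real.exp 1 := by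
      have hb := Real.add_one_le_exp (1 / ((n : ℝ) - 1))
      calc (1 + 1 / ((n : ℝ) - 1)) ^ (n - 1)
          ≤ (Real.exp (1 / ((n : ℝ) - 1))) ^ (n - 1) :=
            pow_le_pow_left₀ (by positivity) (by linarith) _
        _ = Real.exp (((n - 1 : ℕ) : ℝ) * (1 / ((n : ℝ) - 1))) := by
            rw [Real.exp_nat_mul]
        _ = Real.exp 1 := by
            rw [hkK]; congr 1; field_simp
    have hA0 : (0 : ℝ) < (1 + 1 / ((n : ℝ) - 1)) ^ (n - 1) := by positivity
    have hprod : (1 + 1 / ((n : ℝ) - 1)) ^ (n - 1) * (1 - 1 / (n : ℝ)) ^ (n - 1) = 1 := by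
      rw [← mul_pow]
      have : (1 + 1 / ((n : ℝ) - 1)) * (1 - 1 / (n : ℝ)) = 1 := by
        field_simp; ring
      rw [this, one_pow]
    have hB : (1 - 1 / (n : ℝ)) ^ (n - 1) = ((1 + 1 / ((n : ℝ) - 1)) ^ (n - 1))⁻¹ :=
      eq_inv_of_mul_eq_one_left (by linarith [hprod, mul_comm ((1 + 1 / ((n : ℝ) - 1)) ^ (n - 1)) ((1 - 1 / (n : ℝ)) ^ (n - 1))])
    have hlow : (Real.exp 1)⁻¹ ≤ (1 - 1 / (n : ℝ)) ^ (n - 1) := by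
      rw [hB]
      exact inv_anti₀ hA0 hup
    have hB0 : (0 : ℝ) ≤ (1 - 1 / (n : ℝ)) ^ (n - 1) := by
      rw [hB]; positivity
    have h2n : (23 / 12 : ℝ) ≤ 2 - 1 / (n : ℝ) := by
      have : 1 / (n : ℝ) ≤ 1 / 12 := one_div_le_one_div_of_le (by norm_num) h12
      linarith
    have hinv : (2.7182818286 : ℝ)⁻¹ ≤ (Real.exp 1)⁻¹ :=
      inv_anti₀ (Real.exp_pos 1) Real.exp_one_lt_d9.le
    calc (19 / 27 : ℝ) ≤ (2.7182818286 : ℝ)⁻¹ * (23 / 12) := by norm_num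
      _ ≤ (Real.exp 1)⁻¹ * (23 / 12) := by linarith
      _ ≤ (1 - 1 / (n : ℝ)) ^ (n - 1) * (2 - 1 / (n : ℝ)) :=
          mul_le_mul hlow h2n (by norm_num) hB0

lemma cdf_strictAnti (N k : ℕ) (hk : k < N) :
    StrictAntiOn (fun p => binomCdf N p k) (Set.Icc (0 : ℝ) 1) := by
  apply strictAntiOn_of_deriv_neg (convex_Icc 0 1)
  · exact fun p _ => ((hasDerivAt_cdf N p k hk).continuousAt).continuousWithinAt
  · intro p hp
    rw [interior_Icc] at hp
    rw [(hasDerivAt_cdf N p k hk).deriv, neg_lt_zero]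
    have h1 : (0 : ℝ) < ((N - k : ℕ) : ℝ) := by
      exact_mod_cast Nat.sub_pos_of_lt hk
    have h2 : (0 : ℝ) < (N.choose k : ℝ) := by
      exact_mod_cast Nat.choose_pos hk.le
    exact mul_pos (mul_pos (mul_pos h1 h2) (pow_pos hp.1 k)) (pow_pos (by linarith [hp.2]) _)
theorem quantile_le (n x : ℕ) (β g : ℝ) (hn : 1 ≤ n)
    (hβ1 : binomCdf n ((1 : ℝ) / n) 1 ≤ β) (hβ2 : β < 1)
    (hx2 : 2 ≤ x) (hxn : x ≤ n)
    (hg0 : 0 ≤ g) (hg1 : g ≤ 1) (hg : binomTail n g x = 1 - β) :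
    g ≤ ((x : ℝ) - 1) / n := by
  set m := x - 1 with hmdef
  have hm1 : 1 ≤ m := by omega
  have hmn : m < n := by omega
  have hcast : ((x : ℝ) - 1) / n = (m : ℝ) / n := by
    have : (m : ℝ) = (x : ℝ) - 1 := by
      rw [hmdef]; push_cast [Nat.cast_sub (by omega : 1 ≤ x)]; ring
    rw [this]
  rw [hcast]
  have htail_eq : ∀ p : ℝ, binomTail n p x = 1 - binomCdf n p m :=
    fun p => tail_eq n x p (by omega) hxn
  have hkey : binomCdf n ((m : ℝ) / n) m ≤ binomCdf n ((1 : ℝ) / n) 1 := by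
    rcases eq_or_lt_of_le hm1 with h1 | h2
    · rw [← h1]
      norm_num
    · have h3n : 3 ≤ n := by omega
      calc binomCdf n ((m : ℝ) / n) m
          ≤ 1 - ((m : ℝ) / (m + 1)) ^ (m + 1) := cdf_le_base m hm1 n (by omega)
        _ ≤ 1 - 8 / 27 := by linarith [base_ge m (by omega)]
        _ = 19 / 27 := by norm_num
        _ ≤ binomCdf n ((1 : ℝ) / n) 1 := cdf_one_ge n h3n
  by_contra hcon
  push_neg at hcon
  have hn0 : (0 : ℝ) < n := by exact_mod_cast (by omega : 0 < n)
  have hmem1 : (m : ℝ) / n ∈ Set.Icc (0 : ℝ) 1 := by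
    constructor
    · positivity
    · rw [div_le_one hn0]
      exact_mod_cast hmn.le
  have hmem2 : g ∈ Set.Icc (0 : ℝ) 1 := ⟨hg0, hg1⟩
  have hanti := cdf_strictAnti n m hmn hmem1 hmem2 hcon
  simp only at hanti
  have h5 : binomTail n ((m : ℝ) / n) x < binomTail n g x := by
    rw [htail_eq, htail_eq]; linarith
  have h6 : 1 - β ≤ binomTail n ((m : ℝ) / n) x := by
    rw [htail_eq]; linarith
  rw [hg] at h5
  linarith
end

section
/- The sequence β_n := P(Binomial(n, 1/n) ∈ {0,1}) = (1-1/n)^n + (1-1/n)^{n-1} is strictly decreasing in n ≥ 1 and converges to 2/e as n → ∞. -/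
open Filter Real

/-- Cubic alternating Bernoulli-type lower bound for `(1-x)^m`. -/
lemma bern_cubic (m : ℕ) (x : ℝ) (h0 : 0 ≤ x) (h1 : x ≤ 1) :
    1 - m * x + m * (m - 1) / 2 * x ^ 2 - m * (m - 1) * (m - 2) / 6 * x ^ 3
      ≤ (1 - x) ^ m := by
  induction m with
  | zero => norm_num
  | succ k ih =>
    have hk : (0 : ℝ) ≤ (k : ℝ) := Nat.cast_nonneg k
    have hk3 : (0 : ℝ) ≤ (k : ℝ) * ((k : ℝ) - 1) * ((k : ℝ) - 2) := by
      rcases k with _ | _ | j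
      · norm_num
      · norm_num
      · have hj : (0 : ℝ) ≤ (j : ℝ) := Nat.cast_nonneg j
        have h2 : (0 : ℝ) ≤ ((j : ℝ) + 2) * ((j : ℝ) + 1) * (j : ℝ) := by positivity
        push_cast
        nlinarith [h2]
    have hx : (0 : ℝ) ≤ 1 - x := by linarith
    have h := mul_le_mul_of_nonneg_left ih hx
    have hx4 : (0 : ℝ) ≤ x ^ 4 := by positivity
    have ident : (1 - x) * (1 - (k : ℝ) * x + (k : ℝ) * ((k : ℝ) - 1) / 2 * x ^ 2
          - (k : ℝ) * ((k : ℝ) - 1) * ((k : ℝ) - 2) / 6 * x ^ 3)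
        = (1 - ((k : ℝ) + 1) * x + ((k : ℝ) + 1) * (((k : ℝ) + 1) - 1) / 2 * x ^ 2
          - ((k : ℝ) + 1) * (((k : ℝ) + 1) - 1) * (((k : ℝ) + 1) - 2) / 6 * x ^ 3)
          + (k : ℝ) * ((k : ℝ) - 1) * ((k : ℝ) - 2) / 6 * x ^ 4 := by ring
    rw [pow_succ (1 - x) k]
    push_cast
    nlinarith [h, ident, mul_nonneg hk3 hx4]

/-- One step of strict decrease, for `n = m + 1 ≥ 1`. -/
lemma beta_step (m : ℕ) :
    (1 - 1 / ((m : ℝ) + 2)) ^ (m + 2) + (1 - 1 / ((m : ℝ) + 2)) ^ (m + 1)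
      < (1 - 1 / ((m : ℝ) + 1)) ^ (m + 1) + (1 - 1 / ((m : ℝ) + 1)) ^ m := by
  set a : ℝ := (m : ℝ) + 1 with ha_def
  have ha : 1 ≤ a := by
    rw [ha_def]; linarith [Nat.cast_nonneg (α := ℝ) m]
  have ha0 : 0 < a := by linarith
  have ha1 : 0 < a + 1 := by linarith
  have hane : a ≠ 0 := ha0.ne'
  have ha1ne : a + 1 ≠ 0 := ha1.ne'
  have e1 : 1 - 1 / (a + 1) = a / (a + 1) := by field_simp; ring
  have e2 : 1 - 1 / a = (a - 1) / a := by field_simp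
  have hcast : (m : ℝ) + 2 = a + 1 := by rw [ha_def]; ring
  rw [hcast, e1, e2]
  -- rewrite RHS base using s = (a²-1)/a²
  have e3 : (a - 1) / a = (a ^ 2 - 1) / a ^ 2 * (a / (a + 1)) := by
    field_simp
    ring
  have hq : 0 < a / (a + 1) := div_pos ha0 ha1
  have hqm : 0 < (a / (a + 1)) ^ m := pow_pos hq m
  -- the key inequality after dividing by q^m
  have key : (a / (a + 1)) ^ 2 + a / (a + 1)
      < ((a ^ 2 - 1) / a ^ 2) ^ m * ((a - 1) / a + 1) := by
    -- lower bound for s^m via bern_cubic with x = 1/a²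
    have ha2 : (0 : ℝ) < a ^ 2 := by nlinarith
    have hx0 : (0 : ℝ) ≤ 1 / a ^ 2 := le_of_lt (by positivity)
    have hx1 : 1 / a ^ 2 ≤ 1 := by
      rw [div_le_one ha2]; nlinarith
    have hb := bern_cubic m (1 / a ^ 2) hx0 hx1
    have hbase : 1 - 1 / a ^ 2 = (a ^ 2 - 1) / a ^ 2 := by field_simp
    rw [hbase] at hb
    have hm : (m : ℝ) = a - 1 := by rw [ha_def]; ring
    rw [hm] at hb
    set L : ℝ := 1 - (a - 1) * (1 / a ^ 2) + (a - 1) * (a - 1 - 1) / 2 * (1 / a ^ 2) ^ 2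
        - (a - 1) * (a - 1 - 1) * (a - 1 - 2) / 6 * (1 / a ^ 2) ^ 3 with hL_def
    have hr1 : (0 : ℝ) < (a - 1) / a + 1 := by
      have : (0 : ℝ) ≤ (a - 1) / a := div_nonneg (by linarith) (le_of_lt ha0)
      linarith
    have h2 : L * ((a - 1) / a + 1) ≤ ((a ^ 2 - 1) / a ^ 2) ^ m * ((a - 1) / a + 1) :=
      mul_le_mul_of_nonneg_right hb (le_of_lt hr1)
    -- polynomial positivity
    have hbpos : (0 : ℝ) ≤ a - 1 := by linarith
    have hpoly : 0 < a ^ 6 + 5 * a ^ 4 - 11 * a ^ 3 + 6 * a ^ 2 + 11 * a - 6 := by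
      nlinarith [pow_nonneg hbpos 2, pow_nonneg hbpos 3, pow_nonneg hbpos 4,
        pow_nonneg hbpos 5, pow_nonneg hbpos 6]
    have expand : L * ((a - 1) / a + 1) - ((a / (a + 1)) ^ 2 + a / (a + 1))
        = (a ^ 6 + 5 * a ^ 4 - 11 * a ^ 3 + 6 * a ^ 2 + 11 * a - 6)
          / (6 * a ^ 7 * (a + 1) ^ 2) := by
      rw [hL_def]; field_simp; ring
    have hdiv : 0 < (a ^ 6 + 5 * a ^ 4 - 11 * a ^ 3 + 6 * a ^ 2 + 11 * a - 6)
        / (6 * a ^ 7 * (a + 1) ^ 2) :=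
      div_pos hpoly (by positivity)
    linarith
  calc (a / (a + 1)) ^ (m + 2) + (a / (a + 1)) ^ (m + 1)
      = ((a / (a + 1)) ^ 2 + a / (a + 1)) * (a / (a + 1)) ^ m := by ring
    _ < ((a ^ 2 - 1) / a ^ 2) ^ m * ((a - 1) / a + 1) * (a / (a + 1)) ^ m :=
        mul_lt_mul_of_pos_right key hqm
    _ = ((a - 1) / a) ^ m * ((a - 1) / a + 1) := by
        rw [mul_right_comm, ← mul_pow, ← e3]
    _ = ((a - 1) / a) ^ (m + 1) + ((a - 1) / a) ^ m := by ring

theorem beta_seq_strictAnti_tendsto :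
    (∀ m n : ℕ, 1 ≤ m → m < n →
      (1 - 1 / (n : ℝ)) ^ n + (1 - 1 / (n : ℝ)) ^ (n - 1)
        < (1 - 1 / (m : ℝ)) ^ m + (1 - 1 / (m : ℝ)) ^ (m - 1)) ∧
    Filter.Tendsto
      (fun n : ℕ => (1 - 1 / (n : ℝ)) ^ n + (1 - 1 / (n : ℝ)) ^ (n - 1))
      Filter.atTop (nhds (2 / Real.exp 1)) := by
  constructor
  · -- strict decrease: first a consecutive-step version, then induction
    have step : ∀ k : ℕ, 1 ≤ k →
        (1 - 1 / ((k + 1 : ℕ) : ℝ)) ^ (k + 1) + (1 - 1 / ((k + 1 : ℕ) : ℝ)) ^ ((k + 1) - 1)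
          < (1 - 1 / ((k : ℕ) : ℝ)) ^ k + (1 - 1 / ((k : ℕ) : ℝ)) ^ (k - 1) := by
      intro k hk
      obtain ⟨j, rfl⟩ := Nat.exists_eq_add_of_le hk
      have h := beta_step j
      have c1 : ((1 + j + 1 : ℕ) : ℝ) = (j : ℝ) + 2 := by push_cast; ring
      have c2 : ((1 + j : ℕ) : ℝ) = (j : ℝ) + 1 := by push_cast; ring
      have c3 : (1 + j + 1) - 1 = j + 1 := by omega
      have c4 : (1 + j) - 1 = j := by omega
      rw [c1, c2, c3, c4]
      have c5 : 1 + j + 1 = j + 2 := by omega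
      have c6 : 1 + j = j + 1 := by omega
      rw [c5, c6]
      exact h
    intro m n hm hmn
    induction n with
    | zero => omega
    | succ p ih =>
      rcases Nat.lt_or_ge m p with h | h
      · have hp : 1 ≤ p := by omega
        calc (1 - 1 / ((p + 1 : ℕ) : ℝ)) ^ (p + 1) + (1 - 1 / ((p + 1 : ℕ) : ℝ)) ^ ((p + 1) - 1)
            < (1 - 1 / ((p : ℕ) : ℝ)) ^ p + (1 - 1 / ((p : ℕ) : ℝ)) ^ (p - 1) := step p hp
          _ < (1 - 1 / (m : ℝ)) ^ m + (1 - 1 / (m : ℝ)) ^ (m - 1) := ih h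
      · have : m = p := by omega
        subst this
        exact step m hm
  · -- limit
    have h1 : Tendsto (fun n : ℕ => (1 - 1 / (n : ℝ)) ^ n) atTop (nhds (Real.exp (-1))) := by
      have := Real.tendsto_one_add_div_pow_exp (-1)
      refine this.congr fun n => ?_
      ring_nf
    have h2 : Tendsto (fun n : ℕ => (1 - 1 / (n : ℝ))) atTop (nhds 1) := by
      have h : Tendsto (fun n : ℕ => 1 - 1 / (n : ℝ)) atTop (nhds (1 - 0)) :=
        Tendsto.sub tendsto_const_nhds tendsto_one_div_atTop_nhds_zero_nat
      simpa using h
    have h3 : Tendsto (fun n : ℕ => (1 - 1 / (n : ℝ)) ^ (n - 1)) atTop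
        (nhds (Real.exp (-1))) := by
      have hdiv : Tendsto (fun n : ℕ => (1 - 1 / (n : ℝ)) ^ n / (1 - 1 / (n : ℝ))) atTop
          (nhds (Real.exp (-1) / 1)) := h1.div h2 one_ne_zero
      rw [div_one] at hdiv
      refine hdiv.congr' ?_
      filter_upwards [eventually_ge_atTop 2] with n hn
      have hn1 : (1 : ℝ) ≤ (n : ℝ) / 2 := by
        rw [le_div_iff₀ (by norm_num)]
        exact_mod_cast by exact_mod_cast hn
      have hnR : (2 : ℝ) ≤ (n : ℝ) := by exact_mod_cast hn
      have hne : 1 - 1 / (n : ℝ) ≠ 0 := by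
        have : 1 / (n : ℝ) ≤ 1 / 2 := by
          apply one_div_le_one_div_of_le <;> linarith
        intro h; rw [sub_eq_zero] at h; rw [← h] at this; linarith
      have hpow : (1 - 1 / (n : ℝ)) ^ n = (1 - 1 / (n : ℝ)) ^ (n - 1) * (1 - 1 / (n : ℝ)) := by
        rw [← pow_succ]
        congr 1
        omega
      rw [hpow, mul_div_assoc, div_self hne, mul_one]
    have hsum := h1.add h3
    have : Real.exp (-1) + Real.exp (-1) = 2 / Real.exp 1 := by
      rw [Real.exp_neg]; field_simp; ring
    rwa [this] at hsum
end

section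
/- For n ≥ 2, β_n := (1-1/n)^n + (1-1/n)^{n-1} ≤ 3/4. -/
lemma cube_nat_nonneg (k : ℕ) : 0 ≤ (k:ℝ) * ((k:ℝ)-1) * ((k:ℝ)-2) := by
  rcases k with _|_|k
  · norm_num
  · norm_num
  · push_cast
    have h : (0:ℝ) ≤ (k:ℝ) := Nat.cast_nonneg k
    nlinarith [mul_nonneg (mul_nonneg (by linarith : (0:ℝ) ≤ (k:ℝ)+2) (by linarith : (0:ℝ) ≤ (k:ℝ)+1)) h]

lemma bernoulli3 (t : ℝ) (ht : 0 ≤ t) : ∀ m : ℕ,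
    1 + m*t + (m*(m-1)/2)*t^2 + (m*(m-1)*(m-2)/6)*t^3 ≤ (1+t)^m := by
  intro m
  induction m with
  | zero => norm_num
  | succ k ih =>
    have h1 : (0:ℝ) ≤ 1 + t := by linarith
    have h2 := mul_le_mul_of_nonneg_right ih h1
    rw [← pow_succ] at h2
    have h3 := cube_nat_nonneg k
    have ht4 : 0 ≤ t^4 := by positivity
    push_cast
    nlinarith [mul_nonneg h3 ht4]

theorem beta_seq_le_three_quarters (n : ℕ) (hn : 2 ≤ n) :
    (1 - 1 / (n : ℝ)) ^ n + (1 - 1 / (n : ℝ)) ^ (n - 1) ≤ 3 / 4 := by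
  obtain ⟨m, rfl⟩ : ∃ m, n = m + 1 := ⟨n - 1, by omega⟩
  have hm : 1 ≤ m := by omega
  set y : ℝ := (m : ℝ) with hy
  have hy1 : (1:ℝ) ≤ y := Nat.one_le_cast.mpr hm
  have hy0 : (0:ℝ) < y := by linarith
  have hn1 : ((m + 1 : ℕ) : ℝ) = y + 1 := by push_cast; ring
  have hx : (1 : ℝ) - 1 / ((m + 1 : ℕ) : ℝ) = y / (y + 1) := by
    rw [hn1]; field_simp; ring
  have hsub : m + 1 - 1 = m := by omega
  rw [hx, hsub]
  have key := bernoulli3 (1/y) (by positivity) m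
  rw [← hy] at key
  -- S := 1 + y*(1/y) + ... rewrite (1 + 1/y) = (y+1)/y
  have hiv : (1 + 1/y) = (y+1)/y := by field_simp
  rw [hiv] at key
  have hS : (16*y^2 - 6*y + 2) / (6*y^2) ≤ ((y+1)/y)^m := by
    refine le_trans (le_of_eq ?_) key
    field_simp
    ring
  have hSpos : (0:ℝ) < (16*y^2 - 6*y + 2) / (6*y^2) := by
    apply div_pos <;> nlinarith
  have hxpos : (0:ℝ) < y / (y+1) := by positivity
  have hinv : (y/(y+1))^m = (((y+1)/y)^m)⁻¹ := by
    rw [← inv_pow]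
    congr 1
    rw [inv_div]
  have hpow : (y/(y+1))^m ≤ ((16*y^2 - 6*y + 2) / (6*y^2))⁻¹ := by
    rw [hinv]
    exact inv_anti₀ hSpos hS
  have hxx : (y/(y+1))^(m+1) + (y/(y+1))^m = (y/(y+1))^m * ((2*y+1)/(y+1)) := by
    rw [pow_succ]
    field_simp
    ring
  rw [hxx]
  have hq : (0:ℝ) ≤ (2*y+1)/(y+1) := by positivity
  calc (y/(y+1))^m * ((2*y+1)/(y+1))
      ≤ ((16*y^2 - 6*y + 2) / (6*y^2))⁻¹ * ((2*y+1)/(y+1)) :=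
        mul_le_mul_of_nonneg_right hpow hq
    _ ≤ 3/4 := by
        rw [inv_div]
        rw [div_mul_div_comm, div_le_div_iff₀ (by nlinarith) (by norm_num)]
        nlinarith [sq_nonneg (y-1), sq_nonneg y]
end

section
/- For n ≥ 2 and integers k with 1 ≤ k < n/2, P(Binomial(n, k/n) ≤ k-1) > P(Binomial(n, k/n) ≥ k+1), i.e. F_{n,k/n}(k-1) > 1 - F_{n,k/n}(k). -/
open Finset

set_option maxHeartbeats 1000000

lemma aux_one_sub_pow_le {x : ℝ} (h0 : 0 ≤ x) (h1 : x ≤ 1) (c : ℕ) :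
    1 - x ^ c ≤ c * (1 - x) := by
  have hg := geom_sum_mul x c
  have hsum : (∑ i ∈ range c, x ^ i) ≤ (c : ℝ) := by
    calc (∑ i ∈ range c, x ^ i) ≤ ∑ i ∈ range c, 1 :=
          Finset.sum_le_sum fun i _ => pow_le_one₀ h0 h1
      _ = (c : ℝ) := by simp
  have h2 : 1 - x ^ c = (∑ i ∈ range c, x ^ i) * (1 - x) := by linarith [hg]
  rw [h2]
  exact mul_le_mul_of_nonneg_right hsum (by linarith)

lemma aux_le_one_sub_pow {x : ℝ} (h0 : 0 ≤ x) (h1 : x ≤ 1) {d : ℕ} (hd : 1 ≤ d) :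
    (d : ℝ) * x ^ (d - 1) * (1 - x) ≤ 1 - x ^ d := by
  have hg := geom_sum_mul x d
  have h2 : 1 - x ^ d = (∑ i ∈ range d, x ^ i) * (1 - x) := by linarith [hg]
  have hsum : (d : ℝ) * x ^ (d - 1) ≤ ∑ i ∈ range d, x ^ i := by
    calc (d : ℝ) * x ^ (d-1) = ∑ _i ∈ range d, x ^ (d-1) := by simp [mul_comm]
      _ ≤ ∑ i ∈ range d, x ^ i := Finset.sum_le_sum fun i hi =>
          pow_le_pow_of_le_one h0 h1 (by have := Finset.mem_range.1 hi; omega)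
  rw [h2]
  exact mul_le_mul_of_nonneg_right hsum (by linarith)

/-- Key elementary inequality: `M x^m ≤ K x^k + (M-K) x^(m+k)` on `[0,1]`. -/
lemma keyA (k m : ℕ) (hk : 1 ≤ k) (hkm : k < m) {x : ℝ} (h0 : 0 ≤ x) (h1 : x ≤ 1) :
    (m : ℝ) * x ^ m ≤ (k : ℝ) * x ^ k + ((m : ℝ) - k) * x ^ (m + k) := by
  set d : ℕ := m - k with hd
  have hd1 : 1 ≤ d := by omega
  have hmd : m = k + d := by omega
  have hxk : 0 ≤ x ^ k := pow_nonneg h0 k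
  have hxd : 0 ≤ x ^ d := pow_nonneg h0 d
  -- goal ⟺ d * x^m * (1 - x^k) ≤ k * x^k * (1 - x^d)
  have key : (d : ℝ) * x ^ m * (1 - x ^ k) ≤ (k : ℝ) * x ^ k * (1 - x ^ d) := by
    have e1 : 1 - x ^ k ≤ (k : ℝ) * (1 - x) := aux_one_sub_pow_le h0 h1 k
    have e2 : (d : ℝ) * x ^ (d - 1) * (1 - x) ≤ 1 - x ^ d := aux_le_one_sub_pow h0 h1 hd1
    have e3 : x ^ m ≤ x ^ (m - 1) := pow_le_pow_of_le_one h0 h1 (by omega)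
    have e4 : x ^ (m - 1) = x ^ k * x ^ (d - 1) := by
      rw [← pow_add]; congr 1; omega
    have hxm : 0 ≤ x ^ m := pow_nonneg h0 m
    have hxd1 : 0 ≤ x ^ (d-1) := pow_nonneg h0 _
    have h1x : 0 ≤ 1 - x := by linarith
    calc (d : ℝ) * x ^ m * (1 - x ^ k) ≤ (d : ℝ) * x ^ m * ((k:ℝ) * (1-x)) := by
          apply mul_le_mul_of_nonneg_left e1 (by positivity)
      _ ≤ (d : ℝ) * x ^ (m-1) * ((k:ℝ) * (1-x)) := by
          apply mul_le_mul_of_nonneg_right _ (by positivity)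
          apply mul_le_mul_of_nonneg_left e3 (by positivity)
      _ = (k : ℝ) * x ^ k * ((d:ℝ) * x ^ (d-1) * (1-x)) := by rw [e4]; ring
      _ ≤ (k : ℝ) * x ^ k * (1 - x ^ d) := by
          apply mul_le_mul_of_nonneg_left e2 (by positivity)
  have hcast : ((m:ℝ) - k) = (d : ℝ) := by
    have : (m:ℝ) = (k:ℝ) + d := by rw [hmd]; push_cast; ring
    linarith
  have hpow : x ^ m = x ^ k * x ^ d := by rw [hmd, pow_add]
  have hpow2 : x ^ (m + k) = x ^ m * x ^ k := by rw [pow_add]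
  have hk2 : (k:ℝ) * x ^ m = (k:ℝ) * (x ^ k * x ^ d) := by rw [hpow]
  have hmr : (m:ℝ) = (k:ℝ) + (d:ℝ) := by rw [hmd]; push_cast; ring
  have hma : (m:ℝ) * x ^ m = (k:ℝ) * x ^ m + (d:ℝ) * x ^ m := by rw [hmr]; ring
  rw [hcast, hpow2]
  nlinarith [key, hk2, hma]

/-- Derivative of the log-ratio is negative on (0,1). -/
lemma logratio_deriv_neg (k' m' : ℕ) (K M N p q : ℝ) (hkm : k' < m')
    (hK : K = (k':ℝ)+1) (hM : M = (m':ℝ)+1) (hN : N = K + M) (hp : p = K/N) (hq : q = M/N)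
    {x : ℝ} (hx0 : 0 < x) (hx1 : x < 1) :
    (K-1)*((-(q*(((k'+1:ℕ):ℝ)*x^k')))/(1-q*x^(k'+1))) - (M-K)*x⁻¹
      - (M-1)*((-(p*(((m'+1:ℕ):ℝ)*x^m')))/(1-p*x^(m'+1))) < 0 := by
  have hK1 : 1 ≤ K := by rw [hK]; have : (0:ℝ) ≤ k' := Nat.cast_nonneg k'; linarith
  have hKM : K + 1 ≤ M := by
    rw [hK, hM]; have : (k':ℝ)+1 ≤ (m':ℝ) := by exact_mod_cast hkm
    linarith
  have hK0 : 0 < K := by linarith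
  have hM0 : 0 < M := by linarith
  have hN0 : 0 < N := by rw [hN]; linarith
  have hq0 : 0 < q := by rw [hq]; positivity
  have hp0 : 0 < p := by rw [hp]; positivity
  have hq1 : q < 1 := by rw [hq, div_lt_one hN0, hN]; linarith
  have hp1 : p < 1 := by rw [hp, div_lt_one hN0, hN]; linarith
  have hcast1 : ((k'+1:ℕ):ℝ) = K := by rw [hK]; push_cast; ring
  have hcast2 : ((m'+1:ℕ):ℝ) = M := by rw [hM]; push_cast; ring
  rw [hcast1, hcast2]
  have hxk1 : x^(k'+1) ≤ 1 := pow_le_one₀ hx0.le hx1.le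
  have hxklt : x^(k'+1) < 1 := pow_lt_one₀ hx0.le hx1 (by omega)
  have hxm1 : x^(m'+1) ≤ 1 := pow_le_one₀ hx0.le hx1.le
  have hxk0 : 0 < x^(k'+1) := pow_pos hx0 _
  have hxm0 : 0 < x^(m'+1) := pow_pos hx0 _
  have hd1 : 0 < 1 - q*x^(k'+1) := by nlinarith
  have hd2 : 0 < 1 - p*x^(m'+1) := by nlinarith
  have hD1N : 0 < N - M*x^(k'+1) := by nlinarith
  have hD2N : 0 < N - K*x^(m'+1) := by nlinarith
  -- the key elementary inequality
  have key := keyA (k'+1) (m'+1) (by omega) (by omega) hx0.le hx1.le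
  have keyKM : M * x^(m'+1) ≤ K*x^(k'+1) + (M-K)*(x^(m'+1)*x^(k'+1)) := by
    have h := key
    rw [show ((m'+1)+(k'+1)) = (m'+1)+(k'+1) from rfl, pow_add] at h
    have e1 : ((m'+1:ℕ):ℝ) = M := hcast2
    have e2 : ((k'+1:ℕ):ℝ) = K := hcast1
    push_cast at h
    rw [hK, hM]
    convert h using 2 <;> push_cast <;> ring
  -- step B
  have hBstep : K*M*x^(m'+1)*(N-M*x^(k'+1)) ≤ K*K*x^(k'+1)*(N-K*x^(m'+1)) := by
    have h5 := mul_le_mul_of_nonneg_left keyKM (by positivity : (0:ℝ) ≤ K*N)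
    have hNMK2 : K*(x^(m'+1)*x^(k'+1))*(N*(M-K)) = K*(x^(m'+1)*x^(k'+1))*(M^2-K^2) := by
      rw [show N*(M-K) = M^2 - K^2 by rw [hN]; ring]
    nlinarith [h5, hNMK2]
  -- the polynomial inequality
  have POLY : (M-1)*(K*M*x^(m'+1))*(N-M*x^(k'+1))
      < (K-1)*(M*K*x^(k'+1))*(N-K*x^(m'+1)) + (M-K)*((N-M*x^(k'+1))*(N-K*x^(m'+1))) := by
    have hprod : 0 < (M-K)*N*(1-x^(k'+1))*(N-K*x^(m'+1)) := by
      apply mul_pos (mul_pos (mul_pos (by linarith) hN0) (by linarith)) hD2N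
    have hident : (K-1)*(M*K*x^(k'+1))*(N-K*x^(m'+1))
        + (M-K)*((N-M*x^(k'+1))*(N-K*x^(m'+1)))
        - (M-1)*(K*K*x^(k'+1))*(N-K*x^(m'+1))
        = (M-K)*N*(1-x^(k'+1))*(N-K*x^(m'+1)) := by rw [hN]; ring
    have hstep2 := mul_le_mul_of_nonneg_left hBstep (by linarith : (0:ℝ) ≤ M - 1)
    have hre : (M-1)*(K*M*x^(m'+1)*(N-M*x^(k'+1))) = (M-1)*(K*M*x^(m'+1))*(N-M*x^(k'+1)) := by ring
    have hre2 : (M-1)*(K*K*x^(k'+1)*(N-K*x^(m'+1))) = (M-1)*(K*K*x^(k'+1))*(N-K*x^(m'+1)) := by ring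
    linarith [hstep2, hident, hprod, hre, hre2]
  -- express the sum as a single fraction
  set S : ℝ := (K-1)*((q*(K*x^k'))/(1-q*x^(k'+1))) + (M-K)*x⁻¹
      - (M-1)*((p*(M*x^m'))/(1-p*x^(m'+1))) with hSdef
  have hd1' : (1 : ℝ) - M/N*x^(k'+1) ≠ 0 := by rw [← hq]; exact hd1.ne'
  have hd2' : (1 : ℝ) - K/N*x^(m'+1) ≠ 0 := by rw [← hp]; exact hd2.ne'
  have hS : S = ((K-1)*(M*K*x^(k'+1))*(N-K*x^(m'+1))
        + (M-K)*((N-M*x^(k'+1))*(N-K*x^(m'+1)))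
        - (M-1)*(K*M*x^(m'+1))*(N-M*x^(k'+1)))
      / (x*((N-M*x^(k'+1))*(N-K*x^(m'+1)))) := by
    rw [hSdef, hp, hq]
    field_simp
    ring
  have hSpos : 0 < S := by
    rw [hS]
    apply div_pos (by linarith) (by positivity)
  have hfin : (K-1)*((-(q*(K*x^k')))/(1-q*x^(k'+1))) - (M-K)*x⁻¹
      - (M-1)*((-(p*(M*x^m')))/(1-p*x^(m'+1))) = -S := by
    rw [hSdef]; ring
  rw [hfin]
  linarith

/-- The core pointwise integrand comparison, abstract-parameter version. -/
lemma core_pointwise (k' m' : ℕ) (K M N p q : ℝ) (hkm : k' < m')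
    (hK : K = (k':ℝ)+1) (hM : M = (m':ℝ)+1) (hN : N = K + M) (hp : p = K/N) (hq : q = M/N)
    {a : ℝ} (ha0 : 0 < a) (ha1 : a < 1) :
    M^2 * p^(k'+2) * a^((k'+1)*(m'+1)+m') * (1 - p*a^(m'+1))^m'
    < K^2 * q^(m'+2) * a^((k'+1)*(m'+1)+k') * (1 - q*a^(k'+1))^k' := by
  have hK1 : 1 ≤ K := by rw [hK]; have : (0:ℝ) ≤ k' := Nat.cast_nonneg k'; linarith
  have hKM : K + 1 ≤ M := by
    rw [hK, hM]; have : (k':ℝ)+1 ≤ (m':ℝ) := by exact_mod_cast hkm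
    linarith
  have hK0 : 0 < K := by linarith
  have hM0 : 0 < M := by linarith
  have hN0 : 0 < N := by rw [hN]; linarith
  have hq0 : 0 < q := by rw [hq]; positivity
  have hp0 : 0 < p := by rw [hp]; positivity
  have hq1 : q < 1 := by rw [hq, div_lt_one hN0, hN]; linarith
  have hp1 : p < 1 := by rw [hp, div_lt_one hN0, hN]; linarith
  have hD1 : ∀ x : ℝ, 0 ≤ x → x ≤ 1 → 0 < 1 - q*x^(k'+1) := by
    intro x h0 h1
    have h2 : x^(k'+1) ≤ 1 := pow_le_one₀ h0 h1
    nlinarith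
  have hD2 : ∀ x : ℝ, 0 ≤ x → x ≤ 1 → 0 < 1 - p*x^(m'+1) := by
    intro x h0 h1
    have h2 : x^(m'+1) ≤ 1 := pow_le_one₀ h0 h1
    nlinarith
  -- the log-ratio difference function
  set δ : ℝ → ℝ := fun x => (K-1)*Real.log (1-q*x^(k'+1)) - (M-K)*Real.log x
      - (M-1)*Real.log (1-p*x^(m'+1)) with hδdef
  have hderiv : ∀ x : ℝ, 0 < x → x ≤ 1 → HasDerivAt δ
      ((K-1)*((-(q*(((k'+1:ℕ):ℝ)*x^k')))/(1-q*x^(k'+1))) - (M-K)*x⁻¹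
        - (M-1)*((-(p*(((m'+1:ℕ):ℝ)*x^m')))/(1-p*x^(m'+1)))) x := by
    intro x hx0 hx1
    have h1 : HasDerivAt (fun y : ℝ => 1 - q*y^(k'+1)) (-(q*(((k'+1:ℕ):ℝ)*x^k'))) x := by
      have := ((hasDerivAt_pow (k'+1) x).const_mul q).const_sub 1
      simpa using this
    have h2 : HasDerivAt (fun y : ℝ => 1 - p*y^(m'+1)) (-(p*(((m'+1:ℕ):ℝ)*x^m'))) x := by
      have := ((hasDerivAt_pow (m'+1) x).const_mul p).const_sub 1
      simpa using this
    have hl1 := (h1.log (hD1 x hx0.le hx1).ne')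
    have hl2 := (h2.log (hD2 x hx0.le hx1).ne')
    have hl3 := Real.hasDerivAt_log hx0.ne'
    exact ((hl1.const_mul (K-1)).sub (hl3.const_mul (M-K))).sub (hl2.const_mul (M-1))
  -- δ is strictly decreasing on [a,1]
  have hanti : StrictAntiOn δ (Set.Icc a 1) := by
    apply strictAntiOn_of_deriv_neg (convex_Icc a 1)
    · intro x hx
      exact (hderiv x (lt_of_lt_of_le ha0 hx.1) hx.2).continuousAt.continuousWithinAt
    · intro x hx
      rw [interior_Icc] at hx
      have hx0 : 0 < x := lt_trans ha0 hx.1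
      rw [(hderiv x hx0 hx.2.le).deriv]
      exact logratio_deriv_neg k' m' K M N p q hkm hK hM hN hp hq hx0 hx.2
  have hδa : δ 1 < δ a :=
    hanti (Set.mem_Icc.2 ⟨le_refl a, ha1.le⟩) (Set.mem_Icc.2 ⟨ha1.le, le_refl 1⟩) ha1
  -- positivity of both sides
  have hda1 : 0 < 1 - q*a^(k'+1) := hD1 a ha0.le ha1.le
  have hda2 : 0 < 1 - p*a^(m'+1) := hD2 a ha0.le ha1.le
  have hq2 : 0 < 1 - q := by linarith
  have hp2 : 0 < 1 - p := by linarith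
  have hLpos : 0 < M^2 * p^(k'+2) * a^((k'+1)*(m'+1)+m') * (1 - p*a^(m'+1))^m' := by positivity
  have hRpos : 0 < K^2 * q^(m'+2) * a^((k'+1)*(m'+1)+k') * (1 - q*a^(k'+1))^k' := by positivity
  -- compare the logs
  rw [← Real.log_lt_log_iff hLpos hRpos]
  have hqp : 1 - q = p := by rw [hp, hq, hN]; field_simp; ring
  have hpq : 1 - p = q := by rw [hp, hq, hN]; field_simp; ring
  have hKq : K*q = M*p := by rw [hp, hq]; ring
  have hsq : K^2*q^2 = M^2*p^2 := by linear_combination (K*q + M*p) * hKq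
  have hR1L1 : K^2*q^(m'+2)*(1-q)^k' = M^2*p^(k'+2)*(1-p)^m' := by
    rw [hqp, hpq, pow_add, pow_add]
    linear_combination q^m'*p^k'*hsq
  have eL : Real.log (M^2 * p^(k'+2) * a^((k'+1)*(m'+1)+m') * (1 - p*a^(m'+1))^m')
      = 2*Real.log M + (k'+2)*Real.log p + (((k'+1)*(m'+1)+m' : ℕ) : ℝ)*Real.log a
        + m'*Real.log (1-p*a^(m'+1)) := by
    rw [Real.log_mul (by positivity) (by positivity), Real.log_mul (by positivity) (by positivity),
        Real.log_mul (by positivity) (by positivity), Real.log_pow, Real.log_pow, Real.log_pow,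
        Real.log_pow]
    push_cast
    ring
  have eR : Real.log (K^2 * q^(m'+2) * a^((k'+1)*(m'+1)+k') * (1 - q*a^(k'+1))^k')
      = 2*Real.log K + (m'+2)*Real.log q + (((k'+1)*(m'+1)+k' : ℕ) : ℝ)*Real.log a
        + k'*Real.log (1-q*a^(k'+1)) := by
    rw [Real.log_mul (by positivity) (by positivity), Real.log_mul (by positivity) (by positivity),
        Real.log_mul (by positivity) (by positivity), Real.log_pow, Real.log_pow, Real.log_pow,
        Real.log_pow]
    push_cast
    ring
  have eL1 : Real.log (M^2 * p^(k'+2) * (1-p)^m')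
      = 2*Real.log M + (k'+2)*Real.log p + m'*Real.log (1-p) := by
    rw [Real.log_mul (by positivity) (by positivity), Real.log_mul (by positivity) (by positivity),
        Real.log_pow, Real.log_pow, Real.log_pow]
    push_cast
    ring
  have eR1 : Real.log (K^2 * q^(m'+2) * (1-q)^k')
      = 2*Real.log K + (m'+2)*Real.log q + k'*Real.log (1-q) := by
    rw [Real.log_mul (by positivity) (by positivity), Real.log_mul (by positivity) (by positivity),
        Real.log_pow, Real.log_pow, Real.log_pow]
    push_cast
    ring
  have hlogeq : Real.log (K^2*q^(m'+2)*(1-q)^k') = Real.log (M^2*p^(k'+2)*(1-p)^m') := by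
    rw [hR1L1]
  have hδaE : δ a = (K-1)*Real.log (1-q*a^(k'+1)) - (M-K)*Real.log a
      - (M-1)*Real.log (1-p*a^(m'+1)) := by simp only [hδdef]
  have hδ1E : δ 1 = (K-1)*Real.log (1-q) - (M-1)*Real.log (1-p) := by
    simp only [hδdef, one_pow, mul_one, Real.log_one]
    ring
  have hcoef1 : K - 1 = (k':ℝ) := by rw [hK]; ring
  have hcoef2 : M - 1 = (m':ℝ) := by rw [hM]; ring
  have hcoef3 : M - K = (m':ℝ) - (k':ℝ) := by rw [hM, hK]; ring
  have hcast4 : (((k'+1)*(m'+1)+m' : ℕ) : ℝ) = ((k':ℝ)+1)*((m':ℝ)+1) + (m':ℝ) := by push_cast; ring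
  have hcast5 : (((k'+1)*(m'+1)+k' : ℕ) : ℝ) = ((k':ℝ)+1)*((m':ℝ)+1) + (k':ℝ) := by push_cast; ring
  have main_id : Real.log (K^2 * q^(m'+2) * a^((k'+1)*(m'+1)+k') * (1 - q*a^(k'+1))^k')
      - Real.log (M^2 * p^(k'+2) * a^((k'+1)*(m'+1)+m') * (1 - p*a^(m'+1))^m')
      = (δ a - δ 1) + (Real.log (K^2*q^(m'+2)*(1-q)^k') - Real.log (M^2*p^(k'+2)*(1-p)^m')) := by
    rw [eL, eR, eL1, eR1, hδaE, hδ1E, hcoef1, hcoef2, hcoef3, hcast4, hcast5]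
    ring
  linarith [hδa, main_id, hlogeq]

lemma telescope_Icc (r n : ℕ) (g : ℕ → ℝ) :
    ∑ j ∈ Finset.Icc (r+1) n, (g (j-1) - g j) = g r - g (r + (n + 1 - (r+1))) := by
  rw [← Finset.Ico_add_one_right_eq_Icc, Finset.sum_Ico_eq_sum_range]
  have hc : ∀ i ∈ Finset.range (n+1-(r+1)),
      g (r+1+i-1) - g (r+1+i) = g (r+i) - g (r+(i+1)) := by
    intro i _
    congr 2 <;> omega
  rw [Finset.sum_congr rfl hc, Finset.sum_range_sub' (fun i => g (r+i))]
  simp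

lemma hasDerivAt_term (n j : ℕ) (hj1 : 1 ≤ j) (hjn : j ≤ n) (x : ℝ) :
    HasDerivAt (fun p => binomPmf n p j)
      ((n:ℝ) * ((n-1).choose (j-1)) * x^(j-1) * (1-x)^(n-1-(j-1))
        - (n:ℝ) * ((n-1).choose j) * x^j * (1-x)^(n-1-j)) x := by
  have h1 : HasDerivAt (fun p : ℝ => p ^ j) ((j:ℝ) * x^(j-1)) x := hasDerivAt_pow j x
  have h2 : HasDerivAt (fun p : ℝ => (1-p)^(n-j)) (-(((n-j:ℕ):ℝ) * (1-x)^(n-j-1))) x := by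
    have h := (hasDerivAt_pow (n-j) (1-x)).comp x ((hasDerivAt_id x).const_sub 1)
    refine h.congr_deriv ?_
    · ring
  have h3 := (h1.mul h2).const_mul ((n.choose j : ℝ))
  have hfun : (fun p => binomPmf n p j)
      = fun p : ℝ => (n.choose j : ℝ) * (p^j * (1-p)^(n-j)) := by
    funext p; unfold binomPmf; ring
  rw [hfun]
  refine h3.congr_deriv (Eq.symm ?_)
  have hnat1 : n * (n-1).choose (j-1) = n.choose j * j := by
    have h := Nat.add_one_mul_choose_eq (n-1) (j-1)
    rwa [Nat.sub_add_cancel (by omega),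
      Nat.sub_add_cancel (by omega)] at h
  have hnat2 : n * (n-1).choose j = n.choose j * (n - j) := by
    rcases Nat.lt_or_ge j n with hlt | hge
    · have h := Nat.add_one_mul_choose_eq (n-1) j
      rw [Nat.sub_add_cancel (by omega)] at h
      rw [h, Nat.choose_succ_right_eq]
    · have hj : j = n := by omega
      subst hj
      have h0 : (j-1).choose j = 0 := Nat.choose_eq_zero_of_lt (by omega)
      simp [h0]
  have hr1 : (n:ℝ) * ((n-1).choose (j-1)) = (n.choose j : ℝ) * (j:ℝ) := by exact_mod_cast hnat1
  have hr2 : (n:ℝ) * ((n-1).choose j) = (n.choose j : ℝ) * ((n-j:ℕ):ℝ) := by exact_mod_cast hnat2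
  have he1 : n-1-(j-1) = n-j := by omega
  have he2 : n-1-j = n-j-1 := by omega
  rw [he1, he2]
  calc (n:ℝ)*((n-1).choose (j-1))*x^(j-1)*(1-x)^(n-j)
        - (n:ℝ)*((n-1).choose j)*x^j*(1-x)^(n-j-1)
      = ((n:ℝ)*((n-1).choose (j-1)))*x^(j-1)*(1-x)^(n-j)
        - ((n:ℝ)*((n-1).choose j))*x^j*(1-x)^(n-j-1) := by ring
    _ = ((n.choose j:ℝ)*(j:ℝ))*x^(j-1)*(1-x)^(n-j)
        - ((n.choose j:ℝ)*((n-j:ℕ):ℝ))*x^j*(1-x)^(n-j-1) := by rw [hr1, hr2]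
    _ = (n.choose j:ℝ) * ((j:ℝ)*x^(j-1)*(1-x)^(n-j) + x^j*(-(((n-j:ℕ):ℝ)*(1-x)^(n-j-1)))) := by
        ring

lemma tail_hasDeriv (n r : ℕ) (hr : r < n) (x : ℝ) :
    HasDerivAt (fun p => binomTail n p (r+1))
      ((n:ℝ) * ((n-1).choose r) * x^r * (1-x)^(n-1-r)) x := by
  have hsum : HasDerivAt (fun p => ∑ j ∈ Finset.Icc (r+1) n, binomPmf n p j)
      (∑ j ∈ Finset.Icc (r+1) n, ((n:ℝ)*((n-1).choose (j-1))*x^(j-1)*(1-x)^(n-1-(j-1))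
        - (n:ℝ)*((n-1).choose j)*x^j*(1-x)^(n-1-j))) x := by
    apply HasDerivAt.fun_sum
    intro j hj
    have hj' := Finset.mem_Icc.1 hj
    exact hasDerivAt_term n j (by omega) (by omega) x
  have htel := telescope_Icc r n (fun i => (n:ℝ)*((n-1).choose i)*x^i*(1-x)^(n-1-i))
  have hend : r + (n + 1 - (r+1)) = n := by omega
  rw [hend] at htel
  have hzero : (n:ℝ)*((n-1).choose n)*x^n*(1-x)^(n-1-n) = 0 := by
    simp [Nat.choose_eq_zero_of_lt (show n-1 < n by omega)]
  rw [htel, hzero, sub_zero] at hsum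
  exact hsum

lemma binomTail_zero_left (n r : ℕ) (hr : 1 ≤ r) : binomTail n 0 r = 0 := by
  unfold binomTail
  apply Finset.sum_eq_zero
  intro j hj
  have := Finset.mem_Icc.1 hj
  simp [binomPmf, zero_pow (show j ≠ 0 by omega)]

lemma binomTail_integral (n r : ℕ) (hr : r < n) (X : ℝ) :
    binomTail n X (r+1)
      = ∫ t in (0:ℝ)..X, (n:ℝ)*((n-1).choose r)*t^r*(1-t)^(n-1-r) := by
  have hcont : Continuous (fun t : ℝ => (n:ℝ)*((n-1).choose r)*t^r*(1-t)^(n-1-r)) := by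
    fun_prop
  rw [intervalIntegral.integral_eq_sub_of_hasDerivAt
    (f := fun p => binomTail n p (r+1)) (fun t _ => tail_hasDeriv n r hr t)
    (hcont.intervalIntegrable 0 X)]
  rw [binomTail_zero_left n (r+1) (by omega), sub_zero]

lemma cdf_add_tail (n k : ℕ) (hkn : k ≤ n) (p : ℝ) :
    binomCdf n p k + binomTail n p (k+1) = 1 := by
  unfold binomCdf binomTail
  rw [Finset.range_eq_Ico, ← Finset.Ico_add_one_right_eq_Icc,
      Finset.sum_Ico_consecutive _ (by omega : 0 ≤ k+1) (by omega : k+1 ≤ n+1)]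
  rw [← Finset.range_eq_Ico]
  have hb := add_pow p (1-p) n
  rw [show p + (1-p) = 1 from by ring, one_pow] at hb
  rw [show (1:ℝ) = ∑ m ∈ range (n+1), p^m*(1-p)^(n-m)*(n.choose m) from hb]
  apply Finset.sum_congr rfl
  intro j _
  unfold binomPmf
  ring

lemma binomTail_one (n r : ℕ) (hrn : r ≤ n) : binomTail n 1 r = 1 := by
  unfold binomTail
  rw [Finset.sum_eq_single n]
  · simp [binomPmf]
  · intro j hj hne
    have := Finset.mem_Icc.1 hj
    simp [binomPmf, show (1:ℝ)-1 = 0 from by ring, zero_pow (show n - j ≠ 0 by omega)]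
  · intro h
    exact absurd (Finset.mem_Icc.2 ⟨hrn, le_refl n⟩) h

lemma endpoint_eq (k' m' : ℕ) (K M N p q : ℝ) (hN : N = K + M) (hN0 : N ≠ 0)
    (hp : p = K/N) (hq : q = M/N) :
    K^2*q^(m'+2)*(1-q)^k' = M^2*p^(k'+2)*(1-p)^m' := by
  subst hp hq hN
  have hqp : 1 - M/(K+M) = K/(K+M) := by field_simp; ring
  have hpq : 1 - K/(K+M) = M/(K+M) := by field_simp; ring
  have hKq : K*(M/(K+M)) = M*(K/(K+M)) := by ring
  have hsq : K^2*(M/(K+M))^2 = M^2*(K/(K+M))^2 := by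
    linear_combination (K*(M/(K+M)) + M*(K/(K+M))) * hKq
  rw [hqp, hpq, pow_add, pow_add]
  linear_combination (M/(K+M))^m'*(K/(K+M))^k'*hsq

theorem simmons_inequality (n k : ℕ) (hn : 2 ≤ n) (hk1 : 1 ≤ k) (hk : 2 * k < n) :
    binomCdf n ((k : ℝ) / n) (k - 1) > 1 - binomCdf n ((k : ℝ) / n) k := by
  obtain ⟨k', rfl⟩ : ∃ k', k = k'+1 := ⟨k-1, by omega⟩
  obtain ⟨m', hm'⟩ : ∃ m', n - (k'+1) = m'+1 := ⟨n - (k'+1) - 1, by omega⟩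
  have hkm : k' < m' := by omega
  have hn' : n = (k'+1) + (m'+1) := by omega
  set K : ℝ := (k':ℝ)+1 with hKdef
  set M : ℝ := (m':ℝ)+1 with hMdef
  set N : ℝ := K + M with hNdef
  have hNn : (n:ℝ) = N := by rw [hn', hNdef, hKdef, hMdef]; push_cast; ring
  set p : ℝ := K/N with hpdef
  set q : ℝ := M/N with hqdef
  have hK1 : 1 ≤ K := by rw [hKdef]; have : (0:ℝ) ≤ k' := Nat.cast_nonneg k'; linarith
  have hK0 : 0 < K := by linarith
  have hM0 : 0 < M := by rw [hMdef]; positivity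
  have hN0 : 0 < N := by rw [hNdef]; linarith
  have hKM : K + 1 ≤ M := by
    rw [hKdef, hMdef]; have : (k':ℝ)+1 ≤ (m':ℝ) := by exact_mod_cast hkm
    linarith
  have hp0 : 0 < p := by rw [hpdef]; positivity
  have hq0 : 0 < q := by rw [hqdef]; positivity
  have hp1 : p < 1 := by rw [hpdef, div_lt_one hN0, hNdef]; linarith
  have hq1 : q < 1 := by rw [hqdef, div_lt_one hN0, hNdef]; linarith
  have hqp : 1 - q = p := by
    rw [hpdef, hqdef, hNdef]
    have h0 : K + M ≠ 0 := by rw [← hNdef]; exact hN0.ne'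
    field_simp
    ring
  have hKc : ((k'+1:ℕ):ℝ) = K := by rw [hKdef]; push_cast; ring
  have hMc : ((m'+1:ℕ):ℝ) = M := by rw [hMdef]; push_cast; ring
  have hpn : ((k'+1:ℕ):ℝ)/(n:ℝ) = p := by rw [hNn, hpdef, hKc]
  rw [show k'+1-1 = k' from by omega, hpn]
  clear_value K M N p q
  -- basic nat facts
  have e1 : n-1-k' = m'+1 := by omega
  have e2 : n-1-(k'+1) = m' := by omega
  -- CDF/tail identities
  have hC1 : binomCdf n p k' = 1 - binomTail n p (k'+1) := by
    have := cdf_add_tail n k' (by omega) p; linarith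
  have hC2 : 1 - binomCdf n p (k'+1) = binomTail n p (k'+1+1) := by
    have := cdf_add_tail n (k'+1) (by omega) p; linarith
  have hT1 : binomTail n p (k'+1)
      = ∫ t in (0:ℝ)..p, (n:ℝ)*((n-1).choose k')*t^k'*(1-t)^(m'+1) := by
    have h := binomTail_integral n k' (by omega) p
    rwa [e1] at h
  have hT2 : binomTail n p (k'+1+1)
      = ∫ t in (0:ℝ)..p, (n:ℝ)*((n-1).choose (k'+1))*t^(k'+1)*(1-t)^m' := by
    have h := binomTail_integral n (k'+1) (by omega) p
    rwa [e2] at h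
  have hInt1 : (∫ t in (0:ℝ)..1, (n:ℝ)*((n-1).choose k')*t^k'*(1-t)^(m'+1)) = 1 := by
    have h := binomTail_integral n k' (by omega) 1
    rw [e1] at h
    rw [← h]
    exact binomTail_one n (k'+1) (by omega)
  have hcψ : Continuous (fun t : ℝ => (n:ℝ)*((n-1).choose k')*t^k'*(1-t)^(m'+1)) := by fun_prop
  have hcχ : Continuous (fun t : ℝ => (n:ℝ)*((n-1).choose (k'+1))*t^(k'+1)*(1-t)^m') := by
    fun_prop
  have hsplit := intervalIntegral.integral_add_adjacent_intervals
    (hcψ.intervalIntegrable (μ := MeasureTheory.volume) 0 p)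
    (hcψ.intervalIntegrable (μ := MeasureTheory.volume) p 1)
  -- substitution for the ψ-side
  have hderA : ∀ a ∈ Set.uIcc (0:ℝ) 1, HasDerivAt (fun a : ℝ => 1 - q*a^(k'+1))
      (-(q*(((k'+1:ℕ):ℝ)*a^k'))) a := by
    intro a _
    have := ((hasDerivAt_pow (k'+1) a).const_mul q).const_sub 1
    simpa using this
  have hsubA0 := intervalIntegral.integral_comp_smul_deriv hderA
    (by fun_prop : ContinuousOn (fun a : ℝ => -(q*(((k'+1:ℕ):ℝ)*a^k'))) (Set.uIcc 0 1)) hcψ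
  simp only [Function.comp, smul_eq_mul] at hsubA0
  have hend0 : 1 - q*(0:ℝ)^(k'+1) = 1 := by rw [zero_pow (Nat.succ_ne_zero k')]; ring
  have hend1 : 1 - q*(1:ℝ)^(k'+1) = p := by rw [one_pow, mul_one]; exact hqp
  rw [hend0, hend1, intervalIntegral.integral_symm p 1] at hsubA0
  have hnegA : (fun a : ℝ => (-(q*(((k'+1:ℕ):ℝ)*a^k')))
        * ((n:ℝ)*((n-1).choose k')*(1 - q*a^(k'+1))^k'*(1-(1 - q*a^(k'+1)))^(m'+1)))
      = fun a : ℝ => -((q*(((k'+1:ℕ):ℝ)*a^k'))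
        * ((n:ℝ)*((n-1).choose k')*(1 - q*a^(k'+1))^k'*(1-(1 - q*a^(k'+1)))^(m'+1))) := by
    funext a; ring
  rw [hnegA, intervalIntegral.integral_neg, neg_inj] at hsubA0
  -- substitution for the χ-side
  have hderB : ∀ a ∈ Set.uIcc (0:ℝ) 1, HasDerivAt (fun a : ℝ => p*a^(m'+1))
      (p*(((m'+1:ℕ):ℝ)*a^m')) a := by
    intro a _
    exact (hasDerivAt_pow (m'+1) a).const_mul p
  have hsubB0 := intervalIntegral.integral_comp_smul_deriv hderB
    (by fun_prop : ContinuousOn (fun a : ℝ => p*(((m'+1:ℕ):ℝ)*a^m')) (Set.uIcc 0 1)) hcχ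
  simp only [Function.comp, smul_eq_mul] at hsubB0
  have hend0' : p*(0:ℝ)^(m'+1) = 0 := by rw [zero_pow (Nat.succ_ne_zero m')]; ring
  have hend1' : p*(1:ℝ)^(m'+1) = p := by rw [one_pow, mul_one]
  rw [hend0', hend1'] at hsubB0
  -- clean polynomial forms of the substituted integrands
  have hGG : ∀ a : ℝ, (q*(((k'+1:ℕ):ℝ)*a^k'))
        * ((n:ℝ)*((n-1).choose k')*(1 - q*a^(k'+1))^k'*(1-(1 - q*a^(k'+1)))^(m'+1))
      = ((n:ℝ)*((n-1).choose k'))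
        * (K*q^(m'+2)*a^((k'+1)*(m'+1)+k')*(1-q*a^(k'+1))^k') := by
    intro a
    rw [hKc, sub_sub_cancel]
    ring
  have hHH : ∀ a : ℝ, (p*(((m'+1:ℕ):ℝ)*a^m'))
        * ((n:ℝ)*((n-1).choose (k'+1))*(p*a^(m'+1))^(k'+1)*(1-p*a^(m'+1))^m')
      = ((n:ℝ)*((n-1).choose (k'+1)))
        * (M*p^(k'+2)*a^((k'+1)*(m'+1)+m')*(1-p*a^(m'+1))^m') := by
    intro a
    rw [hMc]
    ring
  have hGGint := intervalIntegral.integral_congr (μ := MeasureTheory.volume) (a := (0:ℝ)) (b := 1)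
    (fun a _ => hGG a)
  have hHHint := intervalIntegral.integral_congr (μ := MeasureTheory.volume) (a := (0:ℝ)) (b := 1)
    (fun a _ => hHH a)
  -- constants
  have hc₂K : ((n:ℝ)*((n-1).choose (k'+1)))*K = ((n:ℝ)*((n-1).choose k'))*M := by
    have hnat : ((n-1).choose (k'+1)) * (k'+1) = ((n-1).choose k') * (m'+1) := by
      have h := Nat.choose_succ_right_eq (n-1) k'
      rwa [show n-1-k' = m'+1 from by omega] at h
    have hnatr : (((n-1).choose (k'+1) : ℕ):ℝ) * ((k':ℝ)+1)
        = (((n-1).choose k' : ℕ):ℝ) * ((m':ℝ)+1) := by exact_mod_cast hnat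
    rw [hKdef, hMdef]
    linear_combination (n:ℝ) * hnatr
  have hc₁pos : (0:ℝ) < (n:ℝ)*((n-1).choose k') := by
    have h1 : (0:ℝ) < (n:ℝ) := by exact_mod_cast (by omega : 0 < n)
    have h2 : (0:ℕ) < ((n-1).choose k') := Nat.choose_pos (by omega)
    have h2' : (0:ℝ) < (((n-1).choose k' : ℕ):ℝ) := by exact_mod_cast h2
    exact mul_pos h1 h2'
  -- pointwise comparison of the clean integrands
  have hpt : ∀ x : ℝ, 0 < x → x < 1 →
      ((n:ℝ)*((n-1).choose (k'+1))) * (M*p^(k'+2)*x^((k'+1)*(m'+1)+m')*(1-p*x^(m'+1))^m')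
      < ((n:ℝ)*((n-1).choose k')) * (K*q^(m'+2)*x^((k'+1)*(m'+1)+k')*(1-q*x^(k'+1))^k') := by
    intro x hx0 hx1
    have hcore := core_pointwise k' m' K M N p q hkm hKdef hMdef hNdef hpdef hqdef hx0 hx1
    have h2 := mul_lt_mul_of_pos_left hcore hc₁pos
    have hL : (((n:ℝ)*((n-1).choose (k'+1)))
          * (M*p^(k'+2)*x^((k'+1)*(m'+1)+m')*(1-p*x^(m'+1))^m')) * K
        = ((n:ℝ)*((n-1).choose k'))
          * (M^2 * p^(k'+2) * x^((k'+1)*(m'+1)+m') * (1 - p*x^(m'+1))^m') := by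
      linear_combination (M*p^(k'+2)*x^((k'+1)*(m'+1)+m')*(1-p*x^(m'+1))^m') * hc₂K
    have hR : (((n:ℝ)*((n-1).choose k'))
          * (K*q^(m'+2)*x^((k'+1)*(m'+1)+k')*(1-q*x^(k'+1))^k')) * K
        = ((n:ℝ)*((n-1).choose k'))
          * (K^2 * q^(m'+2) * x^((k'+1)*(m'+1)+k') * (1 - q*x^(k'+1))^k') := by
      ring
    have h3 : (((n:ℝ)*((n-1).choose (k'+1)))
          * (M*p^(k'+2)*x^((k'+1)*(m'+1)+m')*(1-p*x^(m'+1))^m')) * K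
        < (((n:ℝ)*((n-1).choose k'))
          * (K*q^(m'+2)*x^((k'+1)*(m'+1)+k')*(1-q*x^(k'+1))^k')) * K := by
      rw [hL, hR]; exact h2
    exact (mul_lt_mul_iff_left₀ hK0).1 h3
  -- endpoint equality
  have hptend : ((n:ℝ)*((n-1).choose (k'+1))) * (M*p^(k'+2)*(1:ℝ)^((k'+1)*(m'+1)+m')*(1-p*(1:ℝ)^(m'+1))^m')
      = ((n:ℝ)*((n-1).choose k')) * (K*q^(m'+2)*(1:ℝ)^((k'+1)*(m'+1)+k')*(1-q*(1:ℝ)^(k'+1))^k') := by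
    have he := endpoint_eq k' m' K M N p q hNdef hN0.ne' hpdef hqdef
    simp only [one_pow, mul_one]
    have hLK : (((n:ℝ)*((n-1).choose (k'+1))) * (M*p^(k'+2)*(1-p)^m')) * K
        = ((n:ℝ)*((n-1).choose k')) * (M^2*p^(k'+2)*(1-p)^m') := by
      linear_combination (M*p^(k'+2)*(1-p)^m') * hc₂K
    have hRK : (((n:ℝ)*((n-1).choose k')) * (K*q^(m'+2)*(1-q)^k')) * K
        = ((n:ℝ)*((n-1).choose k')) * (K^2*q^(m'+2)*(1-q)^k') := by ring
    apply mul_right_cancel₀ hK0.ne'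
    rw [hLK, hRK, he]
  -- strict integral comparison
  have hGc : ContinuousOn (fun a : ℝ => ((n:ℝ)*((n-1).choose k'))
      * (K*q^(m'+2)*a^((k'+1)*(m'+1)+k')*(1-q*a^(k'+1))^k')) (Set.Icc 0 1) := by fun_prop
  have hHc : ContinuousOn (fun a : ℝ => ((n:ℝ)*((n-1).choose (k'+1)))
      * (M*p^(k'+2)*a^((k'+1)*(m'+1)+m')*(1-p*a^(m'+1))^m')) (Set.Icc 0 1) := by fun_prop
  have hle : ∀ x ∈ Set.Ioc (0:ℝ) 1, ((n:ℝ)*((n-1).choose (k'+1)))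
      * (M*p^(k'+2)*x^((k'+1)*(m'+1)+m')*(1-p*x^(m'+1))^m')
      ≤ ((n:ℝ)*((n-1).choose k'))
      * (K*q^(m'+2)*x^((k'+1)*(m'+1)+k')*(1-q*x^(k'+1))^k') := by
    intro x hx
    rcases eq_or_lt_of_le hx.2 with h1 | h1
    · rw [h1]
      exact le_of_eq hptend
    · exact (hpt x hx.1 h1).le
  have hlt : ∃ c ∈ Set.Icc (0:ℝ) 1, ((n:ℝ)*((n-1).choose (k'+1)))
      * (M*p^(k'+2)*c^((k'+1)*(m'+1)+m')*(1-p*c^(m'+1))^m')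
      < ((n:ℝ)*((n-1).choose k'))
      * (K*q^(m'+2)*c^((k'+1)*(m'+1)+k')*(1-q*c^(k'+1))^k') :=
    ⟨1/2, ⟨by norm_num, by norm_num⟩, hpt (1/2) (by norm_num) (by norm_num)⟩
  have hcomp := intervalIntegral.integral_lt_integral_of_continuousOn_of_le_of_exists_lt
    zero_lt_one hHc hGc hle hlt
  -- put everything together
  rw [hC1, hC2, hT1, hT2]
  have hfinal : (∫ t in (0:ℝ)..p, (n:ℝ)*((n-1).choose (k'+1))*t^(k'+1)*(1-t)^m')
      < ∫ t in p..1, (n:ℝ)*((n-1).choose k')*t^k'*(1-t)^(m'+1) := by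
    rw [← hsubA0, ← hsubB0, hGGint, hHHint]
    exact hcomp
  linarith [hsplit, hInt1, hfinal]
end
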